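/- arXiv:2310.09763 — 15 statements merged into one kernel-verified Lean document; each statement's English description precedes it below -/
import Mathlib

section
/- Let A be a commutative ring, n, r ≥ 0, and P an n×n matrix over A. Then P is idempotent (P·P = P) with image Im(P) := range of the linear map v ↦ P·v a free A-module of rank r if and only if there exist an n×r matrix X and an r×n matrix Y over A such that Y·X = I_r and P = X·Y. -/
/-- A square matrix `P` over a commutative ring is idempotent with image a free
module of rank `r` iff `P = X * Y` with `Y * X = I_r`. -/
theorem stmt_0 {A : Type*} [CommRing A] (n r : ℕ) (P : Matrix (Fin n) (Fin n) A) :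
    (P * P = P ∧
      Nonempty (Module.Basis (Fin r) A (LinearMap.range (Matrix.mulVecLin P)))) ↔
    ∃ (X : Matrix (Fin n) (Fin r) A) (Y : Matrix (Fin r) (Fin n) A),
      Y * X = 1 ∧ P = X * Y := by
  constructor
  · rintro ⟨hP, ⟨b⟩⟩
    set e := P.mulVecLin with he
    have hee : e ∘ₗ e = e := by rw [he, ← Matrix.mulVecLin_mul, hP]
    have hfix : ∀ x ∈ LinearMap.range e, e x = x := by
      rintro x ⟨y, rfl⟩
      exact LinearMap.congr_fun hee y
    let π : (Fin n → A) →ₗ[A] LinearMap.range e := e.rangeRestrict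
    let ι : LinearMap.range e →ₗ[A] (Fin n → A) := (LinearMap.range e).subtype
    have hπι : ∀ x : LinearMap.range e, π (ι x) = x := by
      intro x
      apply Subtype.ext
      exact hfix _ x.2
    refine ⟨LinearMap.toMatrix' (ι ∘ₗ b.equivFun.symm.toLinearMap),
      LinearMap.toMatrix' (b.equivFun.toLinearMap ∘ₗ π), ?_, ?_⟩
    · rw [← LinearMap.toMatrix'_comp, ← LinearMap.toMatrix'_id (R := A) (n := Fin r)]
      congr 1
      apply LinearMap.ext
      intro v
      simp only [LinearMap.coe_comp, Function.comp_apply, LinearEquiv.coe_coe,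
        LinearMap.id_coe, id_eq]
      rw [hπι, LinearEquiv.apply_symm_apply]
    · rw [← LinearMap.toMatrix'_comp]
      have : (ι ∘ₗ b.equivFun.symm.toLinearMap) ∘ₗ (b.equivFun.toLinearMap ∘ₗ π) = e := by
        apply LinearMap.ext
        intro v
        simp only [LinearMap.coe_comp, Function.comp_apply, LinearEquiv.coe_coe,
          LinearEquiv.symm_apply_apply]
        rfl
      rw [this, he]
      exact (LinearMap.toMatrix'_toLin' P).symm
  · rintro ⟨X, Y, hYX, rfl⟩
    have hid : Y.mulVecLin ∘ₗ X.mulVecLin = LinearMap.id := by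
      rw [← Matrix.mulVecLin_mul, hYX, Matrix.mulVecLin_one]
    constructor
    · rw [Matrix.mul_assoc, ← Matrix.mul_assoc Y X Y, hYX, Matrix.one_mul]
    · have hrange : LinearMap.range (X * Y).mulVecLin = LinearMap.range X.mulVecLin := by
        rw [Matrix.mulVecLin_mul]
        apply LinearMap.range_comp_of_range_eq_top
        rw [LinearMap.range_eq_top]
        intro v
        exact ⟨X.mulVecLin v, LinearMap.congr_fun hid v⟩
      have hinj : Function.Injective X.mulVecLin := by
        apply Function.LeftInverse.injective (g := Y.mulVecLin)
        intro v
        exact LinearMap.congr_fun hid v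
      exact ⟨((Pi.basisFun A (Fin r)).map (LinearEquiv.ofInjective _ hinj)).map
        (LinearEquiv.ofEq _ _ hrange.symm)⟩
end

section
/- Let A be a commutative ring, n ≥ 1, P an n×n matrix over A, x a column vector (x : Fin n → A) and y a row vector (y : Fin n → A) such that ∑_i y_i·x_i = 1 and x_i·y_j = P i j for all i, j. Then for any other column vector x' and row vector y' with x'_i·y'_j = P i j for all i, j, there exists a unit u ∈ Aˣ such that x'_i = u·x_i for all i, y_j = u·y'_j for all j, and moreover ∑_i y'_i·x'_i = 1. -/
/-- Uniqueness up to a unit of the outer-product factorization of a rank-one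
idempotent matrix. -/
theorem stmt_1 {A : Type*} [CommRing A] (n : ℕ) (hn : 0 < n)
    (P : Matrix (Fin n) (Fin n) A) (x y : Fin n → A)
    (h1 : ∑ i, y i * x i = 1) (h2 : ∀ i j, x i * y j = P i j)
    (x' y' : Fin n → A) (h3 : ∀ i j, x' i * y' j = P i j) :
    ∃ u : Aˣ, (∀ i, x' i = u * x i) ∧ (∀ j, y j = u * y' j) ∧
      ∑ i, y' i * x' i = 1 := by
  have hxy : ∀ i j, x' i * y' j = x i * y j := fun i j => (h3 i j).trans (h2 i j).symm
  set u : A := ∑ i, y i * x' i with hu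
  set v : A := ∑ i, y' i * x i with hv
  have huv : u * v = 1 := by
    calc u * v = ∑ i, ∑ j, (y i * x' i) * (y' j * x j) := by
          rw [Finset.sum_mul_sum]
      _ = ∑ i, ∑ j, (y i * x i) * (y j * x j) := by
          refine Finset.sum_congr rfl fun i _ => Finset.sum_congr rfl fun j _ => ?_
          linear_combination y i * x j * hxy i j
      _ = (∑ i, y i * x i) * (∑ j, y j * x j) := by rw [Finset.sum_mul_sum]
      _ = 1 := by rw [h1, mul_one]
  have hvu : v * u = 1 := by rw [mul_comm]; exact huv
  have hx : ∀ k, v * x' k = x k := by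
    intro k
    calc v * x' k = ∑ i, x' k * y' i * x i := by
          rw [hv, Finset.sum_mul]; exact Finset.sum_congr rfl fun i _ => by ring
      _ = ∑ i, x k * (y i * x i) := by
          refine Finset.sum_congr rfl fun i _ => ?_
          linear_combination x i * hxy k i
      _ = x k := by rw [← Finset.mul_sum, h1, mul_one]
  refine ⟨⟨u, v, huv, hvu⟩, fun k => ?_, fun j => ?_, ?_⟩
  · show x' k = u * x k
    rw [← hx k, ← mul_assoc, huv, one_mul]
  · show y j = u * y' j
    symm
    calc u * y' j = ∑ i, y i * (x' i * y' j) := by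
          rw [hu, Finset.sum_mul]; exact Finset.sum_congr rfl fun i _ => by ring
      _ = ∑ i, y j * (y i * x i) := by
          refine Finset.sum_congr rfl fun i _ => ?_
          rw [hxy i j]; ring
      _ = y j := by rw [← Finset.mul_sum, h1, mul_one]
  · have : ∑ i, y' i * x' i = ∑ i, y' i * (u * x i) := by
      refine Finset.sum_congr rfl fun i _ => ?_
      linear_combination (y' i * u) * hx i - (y' i * x' i) * huv
    rw [this]
    calc ∑ i, y' i * (u * x i) = u * ∑ i, y' i * x i := by
          rw [Finset.mul_sum]; exact Finset.sum_congr rfl fun i _ => by ring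
      _ = 1 := huv
end

section
/- Let A be a commutative ring and P, Q two idempotent n×n matrices over A (P·P = P, Q·Q = Q). If the images of P and Q in the matrix ring over A/nil(A) are conjugate, i.e., there exists a matrix C over A whose reduction mod nil(A) is invertible and satisfies C̄·P̄·C̄⁻¹ = Q̄, then P and Q are conjugate over A: there exists U ∈ GL_n(A) with U·P·U⁻¹ = Q. -/
/-- A matrix over a commutative ring that becomes invertible modulo the
nilradical is invertible. -/
private lemma lift_isUnit_matrix {A : Type*} [CommRing A] {n : ℕ}
    (M : Matrix (Fin n) (Fin n) A)
    (h : IsUnit (M.map (Ideal.Quotient.mk (nilradical A)))) : IsUnit M := by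
  rw [Matrix.isUnit_iff_isUnit_det] at h ⊢
  rw [← RingHom.mapMatrix_apply, ← RingHom.map_det] at h
  obtain ⟨b', hb'⟩ := isUnit_iff_exists_inv.mp h
  obtain ⟨b, rfl⟩ := Ideal.Quotient.mk_surjective b'
  have hnil : IsNilpotent (M.det * b - 1) := by
    rw [← mem_nilradical, ← Ideal.Quotient.eq_zero_iff_mem, map_sub, map_mul, map_one, hb',
      sub_self]
  have hu : IsUnit (M.det * b) := by
    have := hnil.isUnit_add_one
    simpa using this
  exact isUnit_of_mul_isUnit_left hu

/-- Idempotent matrices that become conjugate over `A ⧸ nilradical A` are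
conjugate over `A`. -/
theorem stmt_2 {A : Type*} [CommRing A] (n : ℕ)
    (P Q : Matrix (Fin n) (Fin n) A) (hP : P * P = P) (hQ : Q * Q = Q)
    (C : Matrix (Fin n) (Fin n) A)
    (hC : IsUnit (C.map (Ideal.Quotient.mk (nilradical A))))
    (hconj : C.map (Ideal.Quotient.mk (nilradical A)) *
        P.map (Ideal.Quotient.mk (nilradical A)) *
        (C.map (Ideal.Quotient.mk (nilradical A)))⁻¹ =
      Q.map (Ideal.Quotient.mk (nilradical A))) :
    ∃ U : (Matrix (Fin n) (Fin n) A)ˣ,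
      (U : Matrix (Fin n) (Fin n) A) * P * (↑U⁻¹ : Matrix (Fin n) (Fin n) A) = Q := by
  set F : Matrix (Fin n) (Fin n) A →+* Matrix (Fin n) (Fin n) (A ⧸ nilradical A) :=
    (Ideal.Quotient.mk (nilradical A)).mapMatrix with hF
  have hmap : ∀ M : Matrix (Fin n) (Fin n) A,
      M.map (Ideal.Quotient.mk (nilradical A)) = F M := fun _ => rfl
  obtain ⟨Cu, rfl⟩ := lift_isUnit_matrix C hC
  -- the conjugate of `P` by `C`
  obtain ⟨e, he_def⟩ : ∃ e : Matrix (Fin n) (Fin n) A,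
      e = (↑Cu : Matrix (Fin n) (Fin n) A) * P * (↑Cu⁻¹ : Matrix (Fin n) (Fin n) A) :=
    ⟨_, rfl⟩
  have hinv : (↑Cu⁻¹ : Matrix (Fin n) (Fin n) A) * (↑Cu : Matrix (Fin n) (Fin n) A) = 1 :=
    Cu.inv_mul
  have he : e * e = e := by
    rw [he_def]
    calc (↑Cu : Matrix (Fin n) (Fin n) A) * P * ↑Cu⁻¹ * (↑Cu * P * ↑Cu⁻¹)
        = ↑Cu * P * ((↑Cu⁻¹ : Matrix (Fin n) (Fin n) A) * ↑Cu) * P * ↑Cu⁻¹ := by noncomm_ring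
      _ = (↑Cu : Matrix (Fin n) (Fin n) A) * (P * P) * ↑Cu⁻¹ := by rw [hinv]; noncomm_ring
      _ = (↑Cu : Matrix (Fin n) (Fin n) A) * P * ↑Cu⁻¹ := by rw [hP]
  -- `e` reduces to `Q̄`
  have hCmap : F ↑Cu =
      (↑(Units.map F.toMonoidHom Cu) : Matrix (Fin n) (Fin n) (A ⧸ nilradical A)) := rfl
  have hCmapinv : F ↑Cu⁻¹ =
      (↑(Units.map F.toMonoidHom Cu)⁻¹ : Matrix (Fin n) (Fin n) (A ⧸ nilradical A)) := rfl
  have hemap : F e = F Q := by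
    rw [hmap, hmap, hmap] at hconj
    have h1 : (F ↑Cu)⁻¹ = F ↑Cu⁻¹ := by
      rw [hCmap, hCmapinv, Matrix.coe_units_inv]
    rw [h1] at hconj
    rw [he_def, map_mul, map_mul, hconj]
  -- the conjugating unit
  obtain ⟨u, hu_def⟩ : ∃ u : Matrix (Fin n) (Fin n) A,
      u = Q * e + (1 - Q) * (1 - e) := ⟨_, rfl⟩
  have hue : u * e = Q * u := by
    have h1 : (1 - e) * e = 0 := by rw [sub_mul, one_mul, he, sub_self]
    have h2 : Q * (1 - Q) = 0 := by rw [mul_sub, mul_one, hQ, sub_self]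
    calc u * e = Q * (e * e) + (1 - Q) * ((1 - e) * e) := by rw [hu_def]; noncomm_ring
      _ = Q * e := by rw [he, h1, mul_zero, add_zero]
      _ = Q * Q * e + Q * (1 - Q) * (1 - e) := by rw [hQ, h2, zero_mul, add_zero]
      _ = Q * u := by rw [hu_def]; noncomm_ring
  have humap : F u = 1 := by
    have hq : F Q * F Q = F Q := by rw [← map_mul, hQ]
    have h1 : (1 - F Q) * (1 - F Q) = 1 - F Q := by
      rw [sub_mul, one_mul, mul_sub, mul_one, hq]; abel
    have expand : F u = F Q * F e + (1 - F Q) * (1 - F e) := by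
      rw [hu_def, map_add, map_mul, map_mul, map_sub, map_sub, map_one]
    rw [expand, hemap, hq, h1]
    abel
  have hu : IsUnit u := by
    apply lift_isUnit_matrix
    rw [hmap u, humap]
    exact isUnit_one
  obtain ⟨U1, hU1⟩ := hu
  refine ⟨U1 * Cu, ?_⟩
  have hUinv : (↑((U1 * Cu)⁻¹) : Matrix (Fin n) (Fin n) A) =
      (↑Cu⁻¹ : Matrix (Fin n) (Fin n) A) * (↑U1⁻¹ : Matrix (Fin n) (Fin n) A) := by
    rw [mul_inv_rev, Units.val_mul]
  rw [hUinv, Units.val_mul, hU1]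
  calc u * (↑Cu : Matrix (Fin n) (Fin n) A) * P *
        ((↑Cu⁻¹ : Matrix (Fin n) (Fin n) A) * (↑U1⁻¹ : Matrix (Fin n) (Fin n) A))
      = u * e * (↑U1⁻¹ : Matrix (Fin n) (Fin n) A) := by rw [he_def]; noncomm_ring
    _ = Q * (u * (↑U1⁻¹ : Matrix (Fin n) (Fin n) A)) := by rw [hue]; noncomm_ring
    _ = Q := by rw [← hU1, Units.mul_inv, mul_one]
end

section
/- Let A be a commutative ring and P an n×n matrix over A such that every entry of P·P − P lies in the nilradical nil(A) (equivalently, the image of P in matrices over A/nil(A) is idempotent). Then there exists an idempotent n×n matrix Q over A (Q·Q = Q) such that every entry of Q − P lies in nil(A). In particular, every idempotent matrix over A_red lifts to an idempotent matrix over A. -/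
open Matrix in
lemma matrix_entry_pow_mem {A : Type*} [CommRing A] {n : ℕ}
    (M : Matrix (Fin n) (Fin n) A) (I : Ideal A) (hM : ∀ i j, M i j ∈ I) :
    ∀ k i j, (M ^ (k + 1)) i j ∈ I ^ (k + 1) := by
  intro k
  induction k with
  | zero => simpa using hM
  | succ k ih =>
    intro i j
    have : (M ^ (k + 2)) i j = ∑ l, (M ^ (k + 1)) i l * M l j := by
      rw [pow_succ]
      simp [Matrix.mul_apply]
    rw [this, pow_succ]
    exact Ideal.sum_mem _ fun l _ => Ideal.mul_mem_mul (ih i l) (hM l j)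

lemma matrix_isNilpotent {A : Type*} [CommRing A] {n : ℕ}
    (M : Matrix (Fin n) (Fin n) A) (hM : ∀ i j, IsNilpotent (M i j)) :
    IsNilpotent M := by
  set I : Ideal A := Ideal.span (Set.range fun p : Fin n × Fin n => M p.1 p.2) with hI
  have hle : I ≤ (0 : Ideal A).radical := by
    rw [Ideal.span_le]
    rintro x ⟨p, rfl⟩
    exact hM p.1 p.2
  have hfg : I.FG := Submodule.fg_span (Set.finite_range _)
  obtain ⟨k, hk⟩ := Ideal.exists_pow_le_of_le_radical_of_fg hle hfg
  refine ⟨k + 1, ?_⟩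
  ext i j
  have h1 : ∀ i j, M i j ∈ I := fun i j => Ideal.subset_span ⟨(i, j), rfl⟩
  have h2 := matrix_entry_pow_mem M I h1 k i j
  have hle2 : I ^ (k + 1) ≤ I ^ k := Ideal.pow_le_pow_right (Nat.le_succ k)
  have : (M ^ (k + 1)) i j ∈ (⊥ : Ideal A) := hk (hle2 h2)
  simpa using this

/-- A matrix which is idempotent modulo the nilradical lifts to an idempotent
matrix. -/
theorem stmt_3 {A : Type*} [CommRing A] (n : ℕ)
    (P : Matrix (Fin n) (Fin n) A)
    (hP : ∀ i j, (P * P - P) i j ∈ nilradical A) :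
    ∃ Q : Matrix (Fin n) (Fin n) A,
      Q * Q = Q ∧ ∀ i j, (Q - P) i j ∈ nilradical A := by
  let f : Matrix (Fin n) (Fin n) A →+* Matrix (Fin n) (Fin n) (A ⧸ nilradical A) :=
    (Ideal.Quotient.mk (nilradical A)).mapMatrix
  have hker : ∀ M ∈ RingHom.ker f, IsNilpotent M := by
    intro M hM
    refine matrix_isNilpotent M fun i j => ?_
    have : f M = 0 := hM
    have hij := congrFun (congrFun this i) j
    rw [show f M i j = (Ideal.Quotient.mk (nilradical A)) (M i j) from rfl] at hij
    rwa [show (0 : Matrix (Fin n) (Fin n) (A ⧸ nilradical A)) i j = 0 from rfl,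
      Ideal.Quotient.eq_zero_iff_mem, mem_nilradical] at hij
  have hfP : IsIdempotentElem (f P) := by
    have : f (P * P - P) = 0 := by
      ext i j
      show (Ideal.Quotient.mk (nilradical A)) ((P * P - P) i j) = 0
      rw [Ideal.Quotient.eq_zero_iff_mem]
      exact hP i j
    rw [map_sub, map_mul, sub_eq_zero] at this
    exact this
  obtain ⟨Q, hQ, hfQ⟩ := exists_isIdempotentElem_eq_of_ker_isNilpotent f hker (f P)
    ⟨P, rfl⟩ hfP
  refine ⟨Q, hQ, fun i j => ?_⟩
  have : f (Q - P) = 0 := by rw [map_sub, hfQ, sub_self]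
  have h2 := congrFun (congrFun this i) j
  rw [show f (Q - P) i j = (Ideal.Quotient.mk (nilradical A)) ((Q - P) i j) from rfl] at h2
  rw [← Ideal.Quotient.eq_zero_iff_mem]
  exact h2
end

section
/- (Kronecker's theorem) Let A be a commutative ring, f and g multivariate polynomials in A[(X_s)_{s ∈ σ}], and h = f·g. Let a be any coefficient of f and b any coefficient of g. Then a·b is integral over the subring of A generated by the coefficients of h. -/
open Polynomial


theorem isIntegralElem_of_forall_valuationSubring {K : Type*} [Field K] (R : Subring K) (x : K)
    (h : ∀ V : ValuationSubring K, R ≤ V.toSubring → x ∈ V) :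
    R.subtype.IsIntegralElem x := by
  by_contra hni
  have hx0 : x ≠ 0 := by
    rintro rfl
    exact hni ⟨X, monic_X, by simp⟩
  set y := x⁻¹ with hy
  set Sa := Algebra.adjoin ↥R ({y} : Set K) with hSa
  set S : Subring K := Sa.toSubring with hS
  have hyS : y ∈ S := Algebra.self_mem_adjoin_singleton ↥R y
  have hRS : R ≤ S := fun r hr => Sa.algebraMap_mem ⟨r, hr⟩
  have hynu : ¬ IsUnit (⟨y, hyS⟩ : S) := by
    intro hu
    obtain ⟨s, hs⟩ := isUnit_iff_exists_inv.mp hu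
    have hs1 : y * (s : K) = 1 := congrArg Subtype.val hs
    have hsS : (s : K) ∈ Sa := s.2
    rw [hSa, Algebra.adjoin_singleton_eq_range_aeval] at hsS
    obtain ⟨p, hp⟩ := hsS
    apply hni
    set n := p.natDegree with hn
    have key : x ^ (n+1) = ∑ k ∈ Finset.range (n+1), (algebraMap ↥R K (p.coeff k)) * x ^ (n - k) := by
      have h1 : ((s : K) * y) * x ^ (n+1) = x ^ (n+1) := by
        rw [mul_comm (s : K) y, hs1, one_mul]
      calc x ^ (n+1) = ((s : K) * y) * x ^ (n+1) := h1.symm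
        _ = ((∑ k ∈ Finset.range (n+1), (algebraMap ↥R K (p.coeff k)) * y ^ k) * y) * x ^ (n+1) := by
            have hp' : eval₂ (algebraMap ↥R K) y p = (s : K) := hp
            rw [← hp', Polynomial.eval₂_eq_sum_range]
        _ = ∑ k ∈ Finset.range (n+1), (algebraMap ↥R K (p.coeff k)) * x ^ (n - k) := by
            rw [Finset.sum_mul, Finset.sum_mul]
            refine Finset.sum_congr rfl fun k hk => ?_
            have hk' : k ≤ n := Nat.lt_succ_iff.mp (Finset.mem_range.mp hk)
            have hxk : x ^ (n+1) = x ^ (k+1) * x ^ (n-k) := by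
              rw [← pow_add]; congr 1; omega
            rw [mul_assoc, mul_assoc]
            congr 1
            rw [hy, hxk, ← mul_assoc, ← pow_succ, inv_pow, inv_mul_cancel_left₀]
            exact pow_ne_zero _ hx0
    refine ⟨X ^ (n+1) - ∑ k ∈ Finset.range (n+1), C (p.coeff k) * X ^ (n - k),
      monic_X_pow_sub ?_, ?_⟩
    · refine lt_of_le_of_lt (Polynomial.degree_sum_le _ _) ?_
      rw [Finset.sup_lt_iff (by exact_mod_cast WithBot.bot_lt_coe (n+1))]
      intro k hk
      refine lt_of_le_of_lt (Polynomial.degree_C_mul_X_pow_le _ _) ?_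
      exact_mod_cast Nat.lt_succ_of_le (Nat.sub_le n k)
    · simp only [eval₂_sub, eval₂_X_pow, eval₂_finset_sum, eval₂_mul, eval₂_C, sub_eq_zero]
      exact key
  obtain ⟨m, hmmax, hym⟩ := exists_max_ideal_of_mem_nonunits (mem_nonunits_iff.mpr hynu)
  haveI := hmmax.isPrime
  set L := LocalSubring.ofPrime S m with hL
  obtain ⟨V, hle, hloc⟩ := L.exists_le_valuationSubring
  have hxV : x ∈ V := h V (le_trans (le_trans hRS (LocalSubring.le_ofPrime S m)) hle)
  have hyL : y ∈ L.toSubring := LocalSubring.le_ofPrime S m hyS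
  have hyunitV : IsUnit (Subring.inclusion hle (⟨y, hyL⟩ : L.toSubring)) := by
    refine isUnit_iff_exists_inv.mpr ⟨⟨x, hxV⟩, Subtype.ext ?_⟩
    exact inv_mul_cancel₀ hx0
  have hyunitL : IsUnit (⟨y, hyL⟩ : L.toSubring) := hloc.1 _ hyunitV
  have heq : algebraMap ↥S ↥L.toSubring ⟨y, hyS⟩ = (⟨y, hyL⟩ : L.toSubring) := Subtype.ext rfl
  have := (IsLocalization.AtPrime.isUnit_to_map_iff ↥L.toSubring m (⟨y, hyS⟩ : S)).mp
    (heq ▸ hyunitL)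
  exact this hym


lemma exists_dominant_coeff {K : Type*} {σ : Type*} {Γ₀ : Type*} [Field K] [LinearOrder σ]
    [LinearOrderedCommGroupWithZero Γ₀] (v : Valuation K Γ₀)
    (f : MvPolynomial σ K) (hf : f ≠ 0) :
    ∃ μs ∈ f.support, (∀ μ, v (f.coeff μ) ≤ v (f.coeff μs)) ∧
      ∀ μ, toLex μ < toLex μs → v (f.coeff μ) < v (f.coeff μs) := by
  classical
  have hfs : f.support.Nonempty := MvPolynomial.support_nonempty.mpr hf
  obtain ⟨μm, hμm_mem, hμm⟩ := f.support.exists_max_image (fun μ => v (f.coeff μ)) hfs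
  set Sf := f.support.filter (fun μ => v (f.coeff μm) ≤ v (f.coeff μ)) with hSf
  obtain ⟨μs, hμs_mem, hμs_min⟩ := Sf.exists_min_image (fun μ => toLex μ)
    ⟨μm, by simp [hSf, hμm_mem]⟩
  have hμs_supp : μs ∈ f.support := (Finset.mem_filter.mp hμs_mem).1
  have hμs_ne : v (f.coeff μs) ≠ 0 :=
    v.ne_zero_iff.mpr (MvPolynomial.mem_support_iff.mp hμs_supp)
  have hμs_max : ∀ μ, v (f.coeff μ) ≤ v (f.coeff μs) := by
    intro μ
    by_cases hμ : μ ∈ f.support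
    · exact le_trans (hμm μ hμ) (Finset.mem_filter.mp hμs_mem).2
    · rw [MvPolynomial.notMem_support_iff.mp hμ, map_zero]
      exact zero_le'
  refine ⟨μs, hμs_supp, hμs_max, ?_⟩
  intro μ hlt
  rcases eq_or_lt_of_le (hμs_max μ) with heq | h
  · exfalso
    have hμsupp : μ ∈ f.support := by
      rw [MvPolynomial.mem_support_iff]
      intro h0
      rw [h0, map_zero] at heq
      exact hμs_ne heq.symm
    have hμSf : μ ∈ Sf := Finset.mem_filter.mpr
      ⟨hμsupp, by rw [heq]; exact (Finset.mem_filter.mp hμs_mem).2⟩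
    exact absurd (hμs_min μ hμSf) (not_le.mpr hlt)
  · exact h

theorem coeff_mul_mem_valuationSubring {K : Type*} [Field K] {σ : Type*}
    (V : ValuationSubring K) (f g : MvPolynomial σ K)
    (hfg : ∀ μ, (f * g).coeff μ ∈ V) (μ0 ν0 : σ →₀ ℕ) :
    f.coeff μ0 * g.coeff ν0 ∈ V := by
  letI : DecidableEq ((σ →₀ ℕ) × (σ →₀ ℕ)) := Classical.decEq _
  by_cases hf : f = 0
  · rw [hf, MvPolynomial.coeff_zero, zero_mul]; exact zero_mem V
  by_cases hg : g = 0
  · rw [hg, MvPolynomial.coeff_zero, mul_zero]; exact zero_mem V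
  letI : LinearOrder σ := IsWellOrder.linearOrder WellOrderingRel
  set v := V.valuation with hv
  obtain ⟨μs, hμs_supp, hμs_max, hμs_lt⟩ := exists_dominant_coeff v f hf
  obtain ⟨νs, hνs_supp, hνs_max, hνs_lt⟩ := exists_dominant_coeff v g hg
  have hμs_ne : v (f.coeff μs) ≠ 0 :=
    v.ne_zero_iff.mpr (MvPolynomial.mem_support_iff.mp hμs_supp)
  have hνs_ne : v (g.coeff νs) ≠ 0 :=
    v.ne_zero_iff.mpr (MvPolynomial.mem_support_iff.mp hνs_supp)
  have hcoeff : v ((f * g).coeff (μs + νs)) = v (f.coeff μs) * v (g.coeff νs) := by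
    rw [MvPolynomial.coeff_mul]
    have hj : ((μs, νs) : (σ →₀ ℕ) × (σ →₀ ℕ)) ∈ Finset.HasAntidiagonal.antidiagonal (μs + νs) :=
      Finset.HasAntidiagonal.mem_antidiagonal.mpr rfl
    rw [v.map_sum_eq_of_lt hj ?_, map_mul]
    · rintro ⟨μ, ν⟩ hp
      rw [Finset.mem_sdiff, Finset.HasAntidiagonal.mem_antidiagonal, Finset.mem_singleton] at hp
      obtain ⟨hsum', hne⟩ := hp
      have hsum : μ + ν = μs + νs := hsum'
      have hne2 : ¬(μ = μs ∧ ν = νs) := by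
        intro ⟨h1, h2⟩
        exact hne (by rw [h1, h2])
      have hμne : μ ≠ μs := by
        intro h
        exact hne2 ⟨h, by subst h; exact add_left_cancel hsum⟩
      rw [map_mul, map_mul]
      rcases lt_or_gt_of_ne (fun h : toLex μ = toLex μs => hμne (by exact_mod_cast h)) with
        hL | hR
      · have h1 : v (f.coeff μ) < v (f.coeff μs) := hμs_lt μ hL
        have h2 : v (g.coeff ν) ≤ v (g.coeff νs) := hνs_max ν
        calc v (f.coeff μ) * v (g.coeff ν) ≤ v (f.coeff μ) * v (g.coeff νs) :=
              mul_le_mul_right h2 _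
          _ < v (f.coeff μs) * v (g.coeff νs) :=
              (mul_lt_mul_iff_left₀ (lt_of_le_of_ne zero_le' (Ne.symm hνs_ne))).mpr h1
      · have hνlt : toLex ν < toLex νs := by
          by_contra hge
          push_neg at hge
          have hlt2 : toLex μs + toLex νs < toLex μ + toLex ν :=
            add_lt_add_of_lt_of_le hR hge
          have heq2 : toLex μ + toLex ν = toLex μs + toLex νs := congrArg toLex hsum
          rw [heq2] at hlt2
          exact lt_irrefl _ hlt2
        have h1 : v (g.coeff ν) < v (g.coeff νs) := hνs_lt ν hνlt
        have h2 : v (f.coeff μ) ≤ v (f.coeff μs) := hμs_max μ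
        calc v (f.coeff μ) * v (g.coeff ν) ≤ v (f.coeff μs) * v (g.coeff ν) :=
              mul_le_mul_left h2 _
          _ < v (f.coeff μs) * v (g.coeff νs) :=
              (mul_lt_mul_iff_right₀ (lt_of_le_of_ne zero_le' (Ne.symm hμs_ne))).mpr h1
  have h1 : v (f.coeff μs) * v (g.coeff νs) ≤ 1 := by
    rw [← hcoeff]
    exact (V.valuation_le_one_iff _).mpr (hfg _)
  refine V.mem_of_valuation_le_one _ ?_
  rw [map_mul]
  calc v (f.coeff μ0) * v (g.coeff ν0) ≤ v (f.coeff μs) * v (g.coeff νs) :=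
        mul_le_mul' (hμs_max μ0) (hνs_max ν0)
    _ ≤ 1 := h1


theorem isIntegralElem_map_of_subset {D A : Type*} [CommRing D] [CommRing A] (φ : D →+* A)
    {T : Set D} {T' : Set A} (hT : ∀ t ∈ T, φ t ∈ T') {x : D}
    (h : (Subring.closure T).subtype.IsIntegralElem x) :
    (Subring.closure T').subtype.IsIntegralElem (φ x) := by
  obtain ⟨p, hp, hp0⟩ := h
  have hmem : ∀ r : ↥(Subring.closure T), φ ((Subring.closure T).subtype r) ∈
      Subring.closure T' := by
    rintro ⟨r, hr⟩
    have h1 : φ r ∈ (Subring.closure T).map φ := ⟨r, hr, rfl⟩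
    rw [RingHom.map_closure] at h1
    exact Subring.closure_mono (Set.image_subset_iff.mpr hT) h1
  let χ : ↥(Subring.closure T) →+* ↥(Subring.closure T') :=
    (φ.comp (Subring.closure T).subtype).codRestrict _ hmem
  refine ⟨p.map χ, hp.map χ, ?_⟩
  rw [Polynomial.eval₂_map]
  have hcomp : (Subring.closure T').subtype.comp χ = φ.comp (Subring.closure T).subtype := rfl
  rw [hcomp, ← Polynomial.hom_eval₂, hp0, map_zero]

theorem isIntegralElem_of_injective_map {D K : Type*} [CommRing D] [CommRing K] (φ : D →+* K)
    (hφ : Function.Injective φ) (T : Set D) (x : D)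
    (h : (Subring.closure (φ '' T)).subtype.IsIntegralElem (φ x)) :
    (Subring.closure T).subtype.IsIntegralElem x := by
  obtain ⟨p, hp, hp0⟩ := h
  have hmap : (Subring.closure T).map φ = Subring.closure (φ '' T) := RingHom.map_closure φ T
  let e : ↥(Subring.closure T) ≃+* ↥(Subring.closure (φ '' T)) :=
    ((Subring.closure T).equivMapOfInjective φ hφ).trans (RingEquiv.subringCongr hmap)
  have hcomp : (φ.comp (Subring.closure T).subtype).comp (e.symm : _ →+* _) =
      (Subring.closure (φ '' T)).subtype := by
    ext r
    show φ ((e.symm r : ↥(Subring.closure T)) : D) = (r : K)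
    have := congrArg (Subtype.val) (e.apply_symm_apply r)
    rw [← this]
    rfl
  refine ⟨p.map (e.symm : _ →+* _), hp.map _, ?_⟩
  apply hφ
  rw [map_zero, Polynomial.hom_eval₂, Polynomial.eval₂_map, hcomp, hp0]

theorem kron_field {K : Type*} [Field K] (σ : Type*) (F G : MvPolynomial σ K)
    (μ0 ν0 : σ →₀ ℕ) :
    (Subring.closure {x : K | ∃ μ, (F * G).coeff μ = x}).subtype.IsIntegralElem
      (F.coeff μ0 * G.coeff ν0) := by
  apply isIntegralElem_of_forall_valuationSubring
  intro V hV
  exact coeff_mul_mem_valuationSubring V F G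
    (fun μ => hV (Subring.subset_closure ⟨μ, rfl⟩)) μ0 ν0

theorem kron_domain {D : Type*} [CommRing D] [IsDomain D] (σ : Type*) (F G : MvPolynomial σ D)
    (μ0 ν0 : σ →₀ ℕ) :
    (Subring.closure {x : D | ∃ μ, (F * G).coeff μ = x}).subtype.IsIntegralElem
      (F.coeff μ0 * G.coeff ν0) := by
  set K := FractionRing D with hK
  set φ := algebraMap D K with hφdef
  have hφ : Function.Injective φ := IsFractionRing.injective D K
  have hset : φ '' {x : D | ∃ μ, (F * G).coeff μ = x} =
      {x : K | ∃ μ, ((MvPolynomial.map φ F) * (MvPolynomial.map φ G)).coeff μ = x} := by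
    ext z
    simp only [Set.mem_image, Set.mem_setOf_eq]
    constructor
    · rintro ⟨_, ⟨μ, rfl⟩, rfl⟩
      exact ⟨μ, by rw [← map_mul, MvPolynomial.coeff_map]⟩
    · rintro ⟨μ, rfl⟩
      exact ⟨(F * G).coeff μ, ⟨μ, rfl⟩, by rw [← map_mul, MvPolynomial.coeff_map]⟩
  apply isIntegralElem_of_injective_map φ hφ
  rw [hset]
  have helt : φ (F.coeff μ0 * G.coeff ν0) =
      (MvPolynomial.map φ F).coeff μ0 * (MvPolynomial.map φ G).coeff ν0 := by
    rw [map_mul, MvPolynomial.coeff_map, MvPolynomial.coeff_map]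
  rw [helt]
  exact kron_field σ _ _ μ0 ν0

/-- Kronecker's theorem: the product of a coefficient of `f` and a coefficient
of `g` is integral over the subring generated by the coefficients of `f * g`. -/
theorem stmt_5 {A : Type*} [CommRing A] (σ : Type*)
    (f g : MvPolynomial σ A) (a b : A)
    (ha : ∃ μ, f.coeff μ = a) (hb : ∃ ν, g.coeff ν = b) :
    (Subring.closure {x : A | ∃ μ, (f * g).coeff μ = x}).subtype.IsIntegralElem
      (a * b) := by
  obtain ⟨μ0, rfl⟩ := ha
  obtain ⟨ν0, rfl⟩ := hb
  classical
  set φ : MvPolynomial ((σ →₀ ℕ) ⊕ (σ →₀ ℕ)) ℤ →+* A :=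
    (MvPolynomial.eval₂Hom (Int.castRingHom A)
      (Sum.elim (fun μ => f.coeff μ) (fun ν => g.coeff ν))) with hφdef
  set F : MvPolynomial σ (MvPolynomial ((σ →₀ ℕ) ⊕ (σ →₀ ℕ)) ℤ) :=
    ∑ μ ∈ f.support, MvPolynomial.monomial μ (MvPolynomial.X (Sum.inl μ)) with hFdef
  set G : MvPolynomial σ (MvPolynomial ((σ →₀ ℕ) ⊕ (σ →₀ ℕ)) ℤ) :=
    ∑ ν ∈ g.support, MvPolynomial.monomial ν (MvPolynomial.X (Sum.inr ν)) with hGdef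
  have hF : MvPolynomial.map φ F = f := by
    rw [hFdef, map_sum]
    rw [Finset.sum_congr rfl (fun μ _ => ?_)]
    · exact MvPolynomial.support_sum_monomial_coeff f
    · rw [MvPolynomial.map_monomial, MvPolynomial.eval₂Hom_X']
      rfl
  have hG : MvPolynomial.map φ G = g := by
    rw [hGdef, map_sum]
    rw [Finset.sum_congr rfl (fun ν _ => ?_)]
    · exact MvPolynomial.support_sum_monomial_coeff g
    · rw [MvPolynomial.map_monomial, MvPolynomial.eval₂Hom_X']
      rfl
  have ha' : φ (F.coeff μ0) = f.coeff μ0 := by rw [← MvPolynomial.coeff_map, hF]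
  have hb' : φ (G.coeff ν0) = g.coeff ν0 := by rw [← MvPolynomial.coeff_map, hG]
  have key := kron_domain σ F G μ0 ν0
  have main := isIntegralElem_map_of_subset φ
    (T' := {x : A | ∃ μ, (f * g).coeff μ = x}) (fun t ht => ?_) key
  · rw [map_mul, ha', hb'] at main
    exact main
  · obtain ⟨μ, rfl⟩ := ht
    exact ⟨μ, by rw [← hF, ← hG, ← map_mul, MvPolynomial.coeff_map]⟩
end

section
/- (Schanuel's example: necessity of seminormality) Let A be a reduced commutative ring. Assume that for every n ≥ 1 and every n×n matrix P over the polynomial ring A[X] which is idempotent of rank 1 (P·P = P, all 2×2 minors P i j·P k l − P i l·P k j vanish, trace P = 1) and satisfies P(0) = I_{n,1}, there exist f, g : Fin n → A[X] with P i j = f i · g j for all i, j. Then A is seminormal: for all b, c ∈ A with b² = c³ there exists a ∈ A with a³ = b and a² = c. -/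
open Polynomial in
private theorem schanuel_domain_aux {D : Type*} [CommRing D] [IsDomain D] (b c : D)
    (hb : b ^ 2 = c ^ 3) (α β γ δ : Polynomial D)
    (e1 : α * β = 1 - C c ^ 2 * X ^ 4)
    (e2 : α * δ = C c * X ^ 3 + C b * X ^ 4)
    (e3 : γ * β = C c * X - C b * X ^ 2 + C c ^ 2 * X ^ 3 - C b * C c * X ^ 4)
    (e4 : γ * δ = C c ^ 2 * X ^ 4) :
    (α.coeff 1 * β.coeff 0) ^ 2 = c ∧ (α.coeff 1 * β.coeff 0) * c = b := by
  rw [← C_pow] at e1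
  rw [← C_pow, ← C_mul] at e3
  rw [← C_pow] at e4
  have h1 : α.coeff 0 * β.coeff 0 = 1 := by
    have h := congrArg (fun p => Polynomial.coeff p 0) e1
    simpa [Polynomial.coeff_mul, Finset.Nat.sum_antidiagonal_eq_sum_range_succ_mk,
      Finset.sum_range_succ, coeff_X_pow] using h
  by_cases hc : c = 0
  · have hb0 : b = 0 := by
      have : b ^ 2 = 0 := by rw [hb, hc]; ring
      exact pow_eq_zero_iff (n := 2) (by norm_num) |>.mp this
    have e1' : α * β = 1 := by rw [e1, hc]; simp
    have hα : IsUnit α := IsUnit.of_mul_eq_one (a := α) β e1'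
    have hdeg : α.natDegree = 0 := Polynomial.natDegree_eq_zero_of_isUnit hα
    have hc1 : α.coeff 1 = 0 := Polynomial.coeff_eq_zero_of_natDegree_lt (by omega)
    exact ⟨by rw [hc1, hc]; ring, by rw [hc1, hb0]; ring⟩
  · have hα0 : α.coeff 0 ≠ 0 := by
      intro h; rw [h, zero_mul] at h1; exact zero_ne_one h1
    have hβ0 : β.coeff 0 ≠ 0 := by
      intro h; rw [h, mul_zero] at h1; exact zero_ne_one h1
    -- coefficients of e2 : δ.coeff 0 = δ.coeff 1 = δ.coeff 2 = 0, α₀δ₃ = c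
    have k0 : α.coeff 0 * δ.coeff 0 = 0 := by
      have h := congrArg (fun p => Polynomial.coeff p 0) e2
      simpa [Polynomial.coeff_mul, Finset.Nat.sum_antidiagonal_eq_sum_range_succ_mk,
        Finset.sum_range_succ, coeff_X_pow] using h
    have hδ0 : δ.coeff 0 = 0 := (mul_eq_zero.mp k0).resolve_left hα0
    have k1 : α.coeff 0 * δ.coeff 1 + α.coeff 1 * δ.coeff 0 = 0 := by
      have h := congrArg (fun p => Polynomial.coeff p 1) e2
      simpa [Polynomial.coeff_mul, Finset.Nat.sum_antidiagonal_eq_sum_range_succ_mk,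
        Finset.sum_range_succ, coeff_X_pow] using h
    have hδ1 : δ.coeff 1 = 0 := by
      rw [hδ0, mul_zero, add_zero] at k1
      exact (mul_eq_zero.mp k1).resolve_left hα0
    have k2 : α.coeff 0 * δ.coeff 2 + α.coeff 1 * δ.coeff 1 + α.coeff 2 * δ.coeff 0 = 0 := by
      have h := congrArg (fun p => Polynomial.coeff p 2) e2
      simpa [Polynomial.coeff_mul, Finset.Nat.sum_antidiagonal_eq_sum_range_succ_mk,
        Finset.sum_range_succ, coeff_X_pow] using h
    have hδ2 : δ.coeff 2 = 0 := by
      rw [hδ0, hδ1] at k2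
      simp only [mul_zero, add_zero] at k2
      exact (mul_eq_zero.mp k2).resolve_left hα0
    have k3 : α.coeff 0 * δ.coeff 3 + α.coeff 1 * δ.coeff 2 + α.coeff 2 * δ.coeff 1
        + α.coeff 3 * δ.coeff 0 = c := by
      have h := congrArg (fun p => Polynomial.coeff p 3) e2
      simpa [Polynomial.coeff_mul, Finset.Nat.sum_antidiagonal_eq_sum_range_succ_mk,
        Finset.sum_range_succ, coeff_X_pow] using h
    have h2 : α.coeff 0 * δ.coeff 3 = c := by
      rw [hδ0, hδ1, hδ2] at k3; simpa using k3
    have k4 : α.coeff 0 * δ.coeff 4 + α.coeff 1 * δ.coeff 3 + α.coeff 2 * δ.coeff 2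
        + α.coeff 3 * δ.coeff 1 + α.coeff 4 * δ.coeff 0 = b := by
      have h := congrArg (fun p => Polynomial.coeff p 4) e2
      simpa [Polynomial.coeff_mul, Finset.Nat.sum_antidiagonal_eq_sum_range_succ_mk,
        Finset.sum_range_succ, coeff_X_pow] using h
    -- coefficients of e3 : γ₀ = 0, γ₁β₀ = c
    have m0 : γ.coeff 0 * β.coeff 0 = 0 := by
      have h := congrArg (fun p => Polynomial.coeff p 0) e3
      simpa [Polynomial.coeff_mul, Finset.Nat.sum_antidiagonal_eq_sum_range_succ_mk,
        Finset.sum_range_succ, coeff_X_pow] using h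
    have hγ0 : γ.coeff 0 = 0 := (mul_eq_zero.mp m0).resolve_right hβ0
    have m1 : γ.coeff 0 * β.coeff 1 + γ.coeff 1 * β.coeff 0 = c := by
      have h := congrArg (fun p => Polynomial.coeff p 1) e3
      simpa [Polynomial.coeff_mul, Finset.Nat.sum_antidiagonal_eq_sum_range_succ_mk,
        Finset.sum_range_succ, coeff_X_pow] using h
    have hγ1β0 : γ.coeff 1 * β.coeff 0 = c := by
      rw [hγ0, zero_mul, zero_add] at m1; exact m1
    have hγ1 : γ.coeff 1 ≠ 0 := by
      intro h; rw [h, zero_mul] at hγ1β0; exact hc hγ1β0.symm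
    have hδ3 : δ.coeff 3 ≠ 0 := by
      intro h; rw [h, mul_zero] at h2; exact hc h2.symm
    -- degree count : γ.natDegree + δ.natDegree = 4, hence δ.coeff 4 = 0
    have hγne : γ ≠ 0 := fun h => hγ1 (by rw [h]; simp)
    have hδne : δ ≠ 0 := fun h => hδ3 (by rw [h]; simp)
    have hdeg4 : γ.natDegree + δ.natDegree = 4 := by
      have := Polynomial.natDegree_mul hγne hδne
      rw [e4] at this
      rw [← this, Polynomial.natDegree_C_mul_X_pow 4 _ (pow_ne_zero 2 hc)]
    have hγd : 1 ≤ γ.natDegree := Polynomial.le_natDegree_of_ne_zero hγ1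
    have hδd : 3 ≤ δ.natDegree := Polynomial.le_natDegree_of_ne_zero hδ3
    have hδd3 : δ.natDegree ≤ 3 := by omega
    have hδ4 : δ.coeff 4 = 0 := Polynomial.coeff_eq_zero_of_natDegree_lt (by omega)
    have h3 : α.coeff 1 * δ.coeff 3 = b := by
      rw [hδ0, hδ1, hδ2, hδ4] at k4; simpa using k4
    -- now conclude
    have htc : (α.coeff 1 * β.coeff 0) * c = b := by
      linear_combination (-(α.coeff 1 * β.coeff 0)) * h2 + (α.coeff 0 * β.coeff 0) * h3 + b * h1
    have hcc : c ^ 2 * ((α.coeff 1 * β.coeff 0) ^ 2 - c) = 0 := by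
      linear_combination ((α.coeff 1 * β.coeff 0) * c + b) * htc + hb
    have ht2 : (α.coeff 1 * β.coeff 0) ^ 2 = c := by
      rcases mul_eq_zero.mp hcc with h | h
      · exact absurd h (pow_ne_zero 2 hc)
      · exact sub_eq_zero.mp h
    exact ⟨ht2, htc⟩

open Polynomial in
/-- Schanuel's example: if every rank-one idempotent matrix over `A[X]` with
`P(0) = I_{n,1}` factors as an outer product over `A[X]`, then the reduced ring
`A` is seminormal. -/
theorem stmt_6 {A : Type*} [CommRing A] [IsReduced A]
    (H : ∀ (n : ℕ), 0 < n → ∀ P : Matrix (Fin n) (Fin n) (Polynomial A),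
      P * P = P →
      (∀ i j k l, P i j * P k l - P i l * P k j = 0) →
      (∑ i, P i i = 1) →
      (∀ i j, Polynomial.eval (0 : A) (P i j) =
        if (i : ℕ) = 0 ∧ (j : ℕ) = 0 then 1 else 0) →
      ∃ f g : Fin n → Polynomial A, ∀ i j, P i j = f i * g j) :
    ∀ b c : A, b ^ 2 = c ^ 3 → ∃ a : A, a ^ 3 = b ∧ a ^ 2 = c := by
  intro b c hbc
  have hb2 : (C b : Polynomial A) ^ 2 = (C c) ^ 3 := by
    rw [← map_pow, ← map_pow, hbc]
  set M : Matrix (Fin 2) (Fin 2) (Polynomial A) :=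
    !![1 - C (c ^ 2) * X ^ 4, C c * X ^ 3 + C b * X ^ 4;
       C c * X - C b * X ^ 2 + C (c ^ 2) * X ^ 3 - C (b * c) * X ^ 4, C (c ^ 2) * X ^ 4]
    with hM
  have hidem : M * M = M := by
    refine Matrix.ext fun i j => ?_
    fin_cases i <;> fin_cases j <;>
      simp [hM, Matrix.mul_apply, Fin.sum_univ_two] <;>
      first
        | ring1
        | linear_combination (X ^ 6 + C c * X ^ 8) * hb2
        | linear_combination (-(X ^ 6 : Polynomial A) - C c * X ^ 8) * hb2
  have hminor : ∀ i j k l, M i j * M k l - M i l * M k j = 0 := by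
    intro i j k l
    fin_cases i <;> fin_cases j <;> fin_cases k <;> fin_cases l <;>
      simp [hM] <;>
      first
        | ring1
        | linear_combination (X ^ 6 + C c * X ^ 8) * hb2
        | linear_combination (-(X ^ 6 : Polynomial A) - C c * X ^ 8) * hb2
  have htr : ∑ i, M i i = 1 := by
    rw [Fin.sum_univ_two]
    simp [hM]
  have hev : ∀ i j, Polynomial.eval (0 : A) (M i j) =
      if (i : ℕ) = 0 ∧ (j : ℕ) = 0 then 1 else 0 := by
    intro i j
    fin_cases i <;> fin_cases j <;> simp [hM]
  obtain ⟨f, g, hfg⟩ := H 2 (by norm_num) M hidem hminor htr hev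
  · -- extract the four equations
    have e1 : f 0 * g 0 = 1 - C c ^ 2 * X ^ 4 := by
      have := hfg 0 0; simp [hM] at this; exact this.symm
    have e2 : f 0 * g 1 = C c * X ^ 3 + C b * X ^ 4 := by
      have := hfg 0 1; simp [hM] at this; exact this.symm
    have e3 : f 1 * g 0 = C c * X - C b * X ^ 2 + C c ^ 2 * X ^ 3 - C b * C c * X ^ 4 := by
      have := hfg 1 0; simp [hM] at this; exact this.symm
    have e4 : f 1 * g 1 = C c ^ 2 * X ^ 4 := by
      have := hfg 1 1; simp [hM] at this; exact this.symm
    set t := (f 0).coeff 1 * (g 0).coeff 0 with ht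
    have key : ∀ (p : Ideal A), p.IsPrime → t ^ 2 - c ∈ p ∧ t * c - b ∈ p := by
      intro p hp
      let q := Ideal.Quotient.mk p
      have hbq : (q b) ^ 2 = (q c) ^ 3 := by rw [← map_pow, ← map_pow, hbc]
      have E1 : (f 0).map q * (g 0).map q
          = 1 - C (q c) ^ 2 * X ^ 4 := by
        have := congrArg (Polynomial.map q) e1
        simpa [Polynomial.map_mul, Polynomial.map_sub, Polynomial.map_pow,
          Polynomial.map_one, Polynomial.map_C, Polynomial.map_X, map_pow] using this
      have E2 : (f 0).map q * (g 1).map q = C (q c) * X ^ 3 + C (q b) * X ^ 4 := by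
        have := congrArg (Polynomial.map q) e2
        simpa [Polynomial.map_mul, Polynomial.map_add, Polynomial.map_pow,
          Polynomial.map_C, Polynomial.map_X] using this
      have E3 : (f 1).map q * (g 0).map q = C (q c) * X - C (q b) * X ^ 2
          + C (q c) ^ 2 * X ^ 3 - C (q b) * C (q c) * X ^ 4 := by
        have := congrArg (Polynomial.map q) e3
        simpa [Polynomial.map_mul, Polynomial.map_add, Polynomial.map_sub,
          Polynomial.map_pow, Polynomial.map_C, Polynomial.map_X, map_pow, map_mul] using this
      have E4 : (f 1).map q * (g 1).map q = C (q c) ^ 2 * X ^ 4 := by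
        have := congrArg (Polynomial.map q) e4
        simpa [Polynomial.map_mul, Polynomial.map_pow, Polynomial.map_C,
          Polynomial.map_X, map_pow] using this
      obtain ⟨H1, H2⟩ := schanuel_domain_aux (q b) (q c) hbq
        ((f 0).map q) ((g 0).map q) ((f 1).map q) ((g 1).map q) E1 E2 E3 E4
      rw [Polynomial.coeff_map, Polynomial.coeff_map] at H1 H2
      constructor
      · rw [← Ideal.Quotient.eq_zero_iff_mem, map_sub, map_pow, ht, map_mul, H1, sub_self]
      · rw [← Ideal.Quotient.eq_zero_iff_mem, map_sub, map_mul, ht, map_mul, H2, sub_self]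
    have hnil : ∀ x : A, (∀ (p : Ideal A), p.IsPrime → x ∈ p) → x = 0 := fun x hx =>
      (nilpotent_iff_mem_prime.mpr hx).eq_zero
    have ht2 : t ^ 2 = c := sub_eq_zero.mp (hnil _ fun p hp => (key p hp).1)
    have htc : t * c = b := sub_eq_zero.mp (hnil _ fun p hp => (key p hp).2)
    refine ⟨t, ?_, ht2⟩
    calc t ^ 3 = t ^ 2 * t := by ring
    _ = c * t := by rw [ht2]
    _ = b := by rw [mul_comm]; exact htc
end

section
/- Let A be an integral domain in which any two elements have a greatest common divisor (a GCD domain). Then Pic A is trivial in the following concrete sense: for every n×n matrix P over A which is idempotent of rank 1 (P·P = P, all 2×2 minors P i j·P k l − P i l·P k j vanish, trace P = 1), there exist f, g : Fin n → A such that P i j = f i · g j for all i, j. -/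
section aux
variable {A : Type*} [CommMonoidWithZero A] [GCDMonoid A]

noncomputable def lgcd : List A → A := List.foldr gcd 0

theorem lgcd_dvd {l : List A} {a : A} (h : a ∈ l) : lgcd l ∣ a := by
  induction l with
  | nil => simp at h
  | cons b t ih =>
    rcases List.mem_cons.mp h with h | h
    · subst h; exact gcd_dvd_left _ _
    · exact (gcd_dvd_right _ _).trans (ih h)

theorem dvd_lgcd {l : List A} {c : A} (h : ∀ a ∈ l, c ∣ a) : c ∣ lgcd l := by
  induction l with
  | nil => simp [lgcd]
  | cons b t ih =>
    exact dvd_gcd (h b List.mem_cons_self) (ih fun a ha => h a (List.mem_cons_of_mem b ha))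

theorem lgcd_mul_left (e : A) (l : List A) :
    Associated (lgcd (l.map (fun x => e * x))) (e * lgcd l) := by
  induction l with
  | nil => simp [lgcd]
  | cons b t ih =>
    have h0 : lgcd ((b :: t).map (fun x => e * x))
        = gcd (e * b) (lgcd (t.map (fun x => e * x))) := rfl
    rw [h0]
    exact (Associated.gcd (Associated.refl (e * b)) ih).trans (gcd_mul_left' e b (lgcd t))

theorem lgcd_mul_right (e : A) (l : List A) :
    Associated (lgcd (l.map (fun x => x * e))) (lgcd l * e) := by
  have h1 : l.map (fun x => x * e) = l.map (fun x => e * x) := by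
    simp [mul_comm]
  rw [h1, mul_comm]
  exact lgcd_mul_left e l

end aux

/-- Over a GCD domain, every rank-one idempotent matrix factors as an outer
product, i.e. `Pic A` is trivial. -/
theorem stmt_7 {A : Type*} [CommRing A] [IsDomain A] [GCDMonoid A] (n : ℕ)
    (P : Matrix (Fin n) (Fin n) A)
    (h1 : P * P = P)
    (h2 : ∀ i j k l, P i j * P k l - P i l * P k j = 0)
    (h3 : ∑ i, P i i = 1) :
    ∃ f g : Fin n → A, ∀ i j, P i j = f i * g j := by
  obtain ⟨k0, hk0⟩ : ∃ k, P k k ≠ 0 := by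
    by_contra h
    push_neg at h
    simp only [h] at h3
    simp at h3
  have minor : ∀ i j k l, P i j * P k l = P i l * P k j := fun i j k l =>
    sub_eq_zero.mp (h2 i j k l)
  set e : A := lgcd (List.ofFn (fun i => P i k0)) with he
  have hedvd : ∀ i, e ∣ P i k0 := fun i =>
    lgcd_dvd (by rw [List.mem_ofFn]; exact ⟨i, rfl⟩)
  choose f hf using hedvd
  have hene : e ≠ 0 := fun h0 => hk0 (by have := hf k0; rw [h0, zero_mul] at this; exact this)
  -- gcd of f is a unit
  have hGunit : IsUnit (lgcd (List.ofFn f)) := by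
    have hmap : List.ofFn (fun i => P i k0) = (List.ofFn f).map (fun x => e * x) := by
      rw [List.map_ofFn]
      congr 1
      ext i
      exact hf i
    have hassoc : Associated e (e * lgcd (List.ofFn f)) := by
      conv_lhs => rw [he, hmap]
      exact lgcd_mul_left e (List.ofFn f)
    obtain ⟨u, hu⟩ := hassoc
    have h2 : (u : A) = lgcd (List.ofFn f) := mul_left_cancel₀ hene hu
    exact h2 ▸ u.isUnit
  have hfk0 : f k0 ≠ 0 := fun h0 =>
    hk0 (by have := hf k0; rw [h0, mul_zero] at this; exact this)
  have key : ∀ i j, f k0 * P i j = f i * P k0 j := by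
    intro i j
    apply mul_left_cancel₀ hene
    have h := minor i j k0 k0
    rw [hf k0, hf i] at h
    calc e * (f k0 * P i j) = P i j * (e * f k0) := by ring
      _ = (e * f i) * P k0 j := h
      _ = e * (f i * P k0 j) := by ring
  have hdvd : ∀ j, f k0 ∣ P k0 j := by
    intro j
    have hd : f k0 ∣ lgcd ((List.ofFn f).map (fun x => x * P k0 j)) := by
      apply dvd_lgcd
      intro a ha
      obtain ⟨x, hx, rfl⟩ := List.mem_map.mp ha
      obtain ⟨i, rfl⟩ := List.mem_ofFn.mp hx
      exact ⟨P i j, (key i j).symm⟩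
    have hassoc := lgcd_mul_right (P k0 j) (List.ofFn f)
    have hd2 : f k0 ∣ lgcd (List.ofFn f) * P k0 j := hd.trans hassoc.dvd
    obtain ⟨u, hu⟩ := hGunit
    rw [← hu] at hd2
    exact Units.dvd_mul_left.mp hd2
  choose g hg using hdvd
  refine ⟨f, g, fun i j => ?_⟩
  apply mul_left_cancel₀ hfk0
  rw [key i j, hg j]
  ring
end

section
/- Let B be a reduced commutative ring and A a subring of B such that A is seminormal. Then the conductor of A in B, 𝔞 = {x ∈ B | x·y ∈ A for all y ∈ B}, is a radical ideal of B: if u ∈ B and u² ∈ 𝔞 then u ∈ 𝔞. Concretely: if u ∈ B satisfies u²·y ∈ A for all y ∈ B, then u·y ∈ A for all y ∈ B. -/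
/-- If `A` is a seminormal subring of a reduced commutative ring `B`, then the
conductor of `A` in `B` is a radical ideal of `B`. -/
theorem stmt_10 {B : Type*} [CommRing B] [IsReduced B] (A : Subring B)
    (hsn : ∀ b c : A, b ^ 2 = c ^ 3 → ∃ a : A, a ^ 3 = b ∧ a ^ 2 = c)
    (u : B) (hu : ∀ y : B, u ^ 2 * y ∈ A) :
    ∀ y : B, u * y ∈ A := by
  intro y
  set t := u * y with ht
  have hc : t ^ 2 ∈ A := by
    have h : t ^ 2 = u ^ 2 * y ^ 2 := by rw [ht]; ring
    rw [h]; exact hu _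
  have hb : t ^ 3 ∈ A := by
    have h : t ^ 3 = u ^ 2 * (u * y ^ 3) := by rw [ht]; ring
    rw [h]; exact hu _
  obtain ⟨a, ha3, ha2⟩ := hsn ⟨t ^ 3, hb⟩ ⟨t ^ 2, hc⟩ (by
    apply Subtype.ext
    push_cast
    ring)
  have h3 : (a : B) ^ 3 = t ^ 3 := congrArg Subtype.val ha3
  have h2 : (a : B) ^ 2 = t ^ 2 := congrArg Subtype.val ha2
  have hat : (a : B) * t ^ 2 = t ^ 3 := by
    calc (a : B) * t ^ 2 = (a : B) * (a : B) ^ 2 := by rw [h2]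
      _ = (a : B) ^ 3 := by ring
      _ = t ^ 3 := h3
  have key : ((a : B) - t) ^ 3 = 0 := by
    linear_combination h3 - 3 * t * h2 + 3 * hat
  have : (a : B) - t = 0 := IsNilpotent.eq_zero ⟨3, key⟩
  have heq : t = (a : B) := (sub_eq_zero.mp this).symm
  rw [heq]
  exact a.2
end

section
/- Let B be a reduced commutative ring, A a subring of B, and c₁,…,c_q ∈ B elements each integral over A such that B is generated as a ring over A by c₁,…,c_q. Let 𝔞 = {x ∈ B | x·y ∈ A for all y ∈ B} be the conductor of A in B, and assume 𝔞 is radical (u² ∈ 𝔞 implies u ∈ 𝔞). Then 𝔞 = {x ∈ A | x·c_i ∈ A for i = 1,…,q}; that is, for x ∈ B one has (x·y ∈ A for all y ∈ B) if and only if (x ∈ A and x·c_i ∈ A for all i). -/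
/-- If `B = A[c₁,…,c_q]` is reduced with each `c_i` integral over the subring
`A`, and the conductor of `A` in `B` is radical, then the conductor equals
`{x ∈ A | x·c_i ∈ A for all i}`. -/
theorem stmt_11 {B : Type*} [CommRing B] [IsReduced B] (A : Subring B) (q : ℕ)
    (c : Fin q → B)
    (hint : ∀ i, A.subtype.IsIntegralElem (c i))
    (hgen : Subring.closure ((A : Set B) ∪ Set.range c) = ⊤)
    (hrad : ∀ u : B, (∀ y : B, u ^ 2 * y ∈ A) → ∀ y : B, u * y ∈ A) :
    ∀ x : B, (∀ y : B, x * y ∈ A) ↔ (x ∈ A ∧ ∀ i, x * c i ∈ A) := by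
  intro x
  constructor
  · intro h
    exact ⟨by simpa using h 1, fun i => h (c i)⟩
  rintro ⟨hxA, hxc⟩
  -- monotonicity helper
  have hmono : ∀ (n m : ℕ) (y : B), n ≤ m → x ^ n * y ∈ A → x ^ m * y ∈ A := by
    intro n m y h hy
    have e : x ^ m * y = x ^ (m - n) * (x ^ n * y) := by
      rw [← mul_assoc, ← pow_add]
      congr 2
      omega
    rw [e]
    exact A.mul_mem (A.pow_mem hxA _) hy
  -- Step 1: for each y there is some n with x^n y ∈ A
  have key : ∀ y : B, ∃ n : ℕ, x ^ n * y ∈ A := by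
    intro y
    have hy : y ∈ Subring.closure ((A : Set B) ∪ Set.range c) := by
      rw [hgen]; trivial
    induction hy using Subring.closure_induction with
    | mem z hz =>
      rcases hz with hz | ⟨i, rfl⟩
      · exact ⟨0, by simpa using hz⟩
      · exact ⟨1, by simpa using hxc i⟩
    | one => exact ⟨0, by simpa using A.one_mem⟩
    | zero => exact ⟨0, by simpa using A.zero_mem⟩
    | add a b _ _ ha hb =>
      obtain ⟨n₁, h₁⟩ := ha
      obtain ⟨n₂, h₂⟩ := hb
      refine ⟨max n₁ n₂, ?_⟩
      rw [mul_add]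
      exact A.add_mem (hmono _ _ _ (le_max_left _ _) h₁) (hmono _ _ _ (le_max_right _ _) h₂)
    | neg a _ ha =>
      obtain ⟨n, h⟩ := ha
      exact ⟨n, by rw [mul_neg]; exact A.neg_mem h⟩
    | mul a b _ _ ha hb =>
      obtain ⟨n₁, h₁⟩ := ha
      obtain ⟨n₂, h₂⟩ := hb
      refine ⟨n₁ + n₂, ?_⟩
      have e : x ^ (n₁ + n₂) * (a * b) = (x ^ n₁ * a) * (x ^ n₂ * b) := by ring
      rw [e]
      exact A.mul_mem h₁ h₂
  -- Step 2: module finiteness gives a uniform exponent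
  have hfg : (Algebra.adjoin (↥A) (Set.range c)).toSubmodule.FG :=
    fg_adjoin_of_finite (Set.finite_range c) (fun z hz => by
      obtain ⟨i, rfl⟩ := hz
      exact hint i)
  have hadj : Algebra.adjoin (↥A) (Set.range c) = ⊤ := by
    have := Algebra.adjoin_eq_ring_closure (R := ↥A) (Set.range c)
    apply Subalgebra.toSubring_injective
    rw [this, Algebra.top_toSubring]
    rw [eq_top_iff]
    rw [← hgen]
    apply Subring.closure_mono
    apply Set.union_subset_union_left
    intro z hz
    exact ⟨⟨z, hz⟩, rfl⟩
  rw [hadj] at hfg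
  obtain ⟨s, hs⟩ := hfg
  have hNs : ∀ b ∈ s, x ^ (s.sup fun b => (key b).choose) * b ∈ A := by
    intro b hb
    exact hmono _ _ _ (Finset.le_sup hb) (key b).choose_spec
  set N := s.sup fun b => (key b).choose with hN
  have uniform : ∀ y : B, x ^ N * y ∈ A := by
    intro y
    have hy : y ∈ Submodule.span (↥A) (s : Set B) := by
      rw [hs]; trivial
    induction hy using Submodule.span_induction with
    | mem z hz => exact hNs z hz
    | zero => simpa using A.zero_mem
    | add a b _ _ ha hb => rw [mul_add]; exact A.add_mem ha hb
    | smul a z _ hz =>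
      have e : x ^ N * (a • z) = (a : B) * (x ^ N * z) := by
        rw [Algebra.smul_def]
        show x ^ N * ((a : B) * z) = _
        ring
      rw [e]
      exact A.mul_mem a.2 hz
  -- Step 3: descent using hrad
  have descent : ∀ n : ℕ, 1 ≤ n → (∀ y : B, x ^ n * y ∈ A) → ∀ y : B, x * y ∈ A := by
    intro n
    induction n using Nat.strong_induction_on with
    | _ n ih =>
      intro h1 hn
      rcases eq_or_lt_of_le h1 with heq | hlt
      · intro y
        have := hn y
        rwa [← heq, pow_one] at this
      · have hm1 : 1 ≤ (n + 1) / 2 := by omega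
        have hmn : (n + 1) / 2 < n := by omega
        have h2m : n ≤ 2 * ((n + 1) / 2) := by omega
        refine ih _ hmn hm1 ?_
        intro y
        apply hrad (x ^ ((n + 1) / 2))
        intro z
        have e : (x ^ ((n + 1) / 2)) ^ 2 * z = x ^ n * (x ^ (2 * ((n + 1) / 2) - n) * z) := by
          rw [← pow_mul, ← mul_assoc, ← pow_add]
          congr 2
          omega
        rw [e]
        exact hn _
  exact descent (max N 1) (le_max_right _ _) (fun y => hmono _ _ _ (le_max_left _ _) (uniform y))
end

section
/- (Elimination of the minimal prime) Let C be a reduced commutative ring and P an n×n matrix over C[X₁,…,X_m] which is idempotent of rank 1 (P·P = P, all 2×2 minors vanish, trace P = 1) with P(0) = I_{n,1}. Assume that for every a ∈ C the following holds: if the image of P over (Localization.Away a)[X₁,…,X_m] factors as an outer product, i.e., there exist f, g : Fin n → (Localization.Away a)[X₁,…,X_m] with ∑_i g i · f i = 1 and (image of P) i j = f i · g j for all i, j, then a = 0. Then C is the trivial ring: 1 = 0 in C. -/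
theorem lemA {R : Type*} [CommRing R] [IsDomain R] [NormalizedGCDMonoid R]
    {n : ℕ} (hn : 0 < n) (P : Matrix (Fin n) (Fin n) R)
    (h2 : ∀ i j k l, P i j * P k l - P i l * P k j = 0)
    (h3 : ∑ i, P i i = 1)
    (hd : P ⟨0, hn⟩ ⟨0, hn⟩ ≠ 0) :
    ∃ f g : Fin n → R, (∑ i, g i * f i = 1) ∧ ∀ i j, P i j = f i * g j := by
  classical
  set z : Fin n := ⟨0, hn⟩ with hz
  have minor : ∀ i j, P i j * P z z = P i z * P z j := by
    intro i j
    have := h2 i j z z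
    linear_combination this
  obtain ⟨f, hf, hf1⟩ := Finset.extract_gcd (fun i : Fin n => P i z) ⟨z, Finset.mem_univ z⟩
  obtain ⟨g, hg, hg1⟩ := Finset.extract_gcd (fun j : Fin n => P z j) ⟨z, Finset.mem_univ z⟩
  set e := Finset.univ.gcd (fun i : Fin n => P i z) with he_def
  set h := Finset.univ.gcd (fun j : Fin n => P z j) with hh_def
  have hfz : P z z = e * f z := hf z (Finset.mem_univ z)
  have hgz : P z z = h * g z := hg z (Finset.mem_univ z)
  have he : e ≠ 0 := fun h0 => hd (by rw [hfz, h0, zero_mul])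
  have hh : h ≠ 0 := fun h0 => hd (by rw [hgz, h0, zero_mul])
  set s := ∑ i, f i * g i with hs_def
  have key : e * h * s = P z z := by
    have t1 : ∀ i, P i i * P z z = e * h * (f i * g i) := by
      intro i
      rw [minor i i, hf i (Finset.mem_univ i), hg i (Finset.mem_univ i)]
      ring
    calc e * h * s = ∑ i, e * h * (f i * g i) := by rw [hs_def, Finset.mul_sum]
    _ = ∑ i, P i i * P z z := by simp_rw [t1]
    _ = (∑ i, P i i) * P z z := by rw [Finset.sum_mul]
    _ = P z z := by rw [h3, one_mul]
  have key2 : ∀ i j, P i j * s = f i * g j := by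
    intro i j
    have : (e * h) * (P i j * s) = (e * h) * (f i * g j) := by
      have m := minor i j
      rw [hf i (Finset.mem_univ i), hg j (Finset.mem_univ j)] at m
      calc (e * h) * (P i j * s) = P i j * (e * h * s) := by ring
      _ = P i j * P z z := by rw [key]
      _ = e * f i * (h * g j) := m
      _ = (e * h) * (f i * g j) := by ring
    exact mul_left_cancel₀ (mul_ne_zero he hh) this
  have hsu : IsUnit s := by
    have hsg : ∀ j, s ∣ g j := by
      intro j
      have : s ∣ Finset.univ.gcd (fun i : Fin n => f i * g j) := by
        apply Finset.dvd_gcd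
        intro i _
        exact ⟨P i j, by rw [← key2 i j]; ring⟩
      have := this.trans (Finset.gcd_mul_right' (s := Finset.univ) (f := f) (g j)).dvd
      rw [hf1, one_mul] at this
      exact this
    have : s ∣ Finset.univ.gcd (fun j : Fin n => g j) :=
      Finset.dvd_gcd fun j _ => hsg j
    rw [hg1] at this
    exact isUnit_of_dvd_one this
  obtain ⟨u, hu⟩ := hsu
  refine ⟨f, fun j => (↑u⁻¹ : R) * g j, ?_, ?_⟩
  · have e1 : ∑ i, (↑u⁻¹ : R) * g i * f i = (↑u⁻¹ : R) * s := by
      rw [hs_def, Finset.mul_sum]; apply Finset.sum_congr rfl; intros; ring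
    rw [e1, ← hu, u.inv_mul]
  · intro i j
    have e2 : f i * ((↑u⁻¹ : R) * g j) = (P i j * s) * (↑u⁻¹ : R) := by
      rw [key2 i j]; ring
    rw [e2, ← hu, mul_assoc, u.mul_inv, mul_one]

theorem lemField {C : Type*} [CommRing C] [IsReduced C] {p : Ideal C} [hpp : p.IsPrime]
    (hp : p ∈ minimalPrimes C) : IsField (Localization.AtPrime p) := by
  rw [IsLocalRing.isField_iff_maximalIdeal_eq]
  have huniq : ∀ J : Ideal (Localization.AtPrime p), J.IsPrime →
      J = IsLocalRing.maximalIdeal (Localization.AtPrime p) := by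
    intro J hJ
    have hc := (IsLocalization.isPrime_iff_isPrime_disjoint p.primeCompl _ J).mp hJ
    have hle : Ideal.comap (algebraMap C (Localization.AtPrime p)) J ≤ p := by
      intro x hx
      by_contra hxp
      exact Set.disjoint_left.mp hc.2 hxp hx
    have heq : Ideal.comap (algebraMap C (Localization.AtPrime p)) J = p :=
      le_antisymm hle (hp.2 ⟨hc.1, bot_le⟩ hle)
    have hmc := IsLocalization.map_comap p.primeCompl (Localization.AtPrime p) J
    rw [Ideal.under, heq, Localization.AtPrime.map_eq_maximalIdeal] at hmc
    exact hmc.symm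
  have hnil : IsLocalRing.maximalIdeal (Localization.AtPrime p) ≤
      nilradical (Localization.AtPrime p) := by
    rw [nilradical_eq_sInf]
    intro x hx
    rw [Submodule.mem_sInf]
    intro J hJ
    rw [huniq J hJ]
    exact hx
  rw [nilradical_eq_zero] at hnil
  exact le_antisymm hnil bot_le

attribute [local instance] MvPolynomial.algebraMvPolynomial

/-- Elimination of the minimal prime: if for every `a : C` the fact that `Im P`
becomes free (factors as an outer product) over `C[1/a][X₁,…,X_m]` forces
`a = 0`, then the reduced ring `C` is trivial. -/
theorem stmt_12 {C : Type*} [CommRing C] [IsReduced C] (n m : ℕ)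
    (P : Matrix (Fin n) (Fin n) (MvPolynomial (Fin m) C))
    (h1 : P * P = P)
    (h2 : ∀ i j k l, P i j * P k l - P i l * P k j = 0)
    (h3 : ∑ i, P i i = 1)
    (h0 : ∀ i j, MvPolynomial.eval (fun _ => (0 : C)) (P i j) =
      if (i : ℕ) = 0 ∧ (j : ℕ) = 0 then 1 else 0)
    (H : ∀ a : C,
      (∃ f g : Fin n → MvPolynomial (Fin m) (Localization.Away a),
        (∑ i, g i * f i = 1) ∧
        ∀ i j, MvPolynomial.map (algebraMap C (Localization.Away a)) (P i j) =
          f i * g j) →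
      a = 0) :
    (1 : C) = 0 := by
  classical
  by_contra h10
  haveI : Nontrivial C := ⟨1, 0, h10⟩
  -- n is positive
  rcases Nat.eq_zero_or_pos n with hn | hn
  · subst hn
    have : (0 : MvPolynomial (Fin m) C) = 1 := by simpa using h3
    exact h10 (by simpa using congrArg (MvPolynomial.eval (fun _ => (0 : C))) this.symm)
  -- minimal prime
  obtain ⟨M0, hM0⟩ := Ideal.exists_maximal C
  obtain ⟨p, hp, -⟩ := Ideal.exists_minimalPrimes_le (I := (⊥ : Ideal C)) (J := M0) bot_le
  haveI hpp : p.IsPrime := hp.1.1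
  set K := Localization.AtPrime p with hK_def
  have hKfield : IsField K := lemField hp
  letI : Field K := hKfield.toField
  set φ := algebraMap C K with hφ
  set P' : Matrix (Fin n) (Fin n) (MvPolynomial (Fin m) K) :=
    fun i j => MvPolynomial.map φ (P i j) with hP'
  have h2' : ∀ i j k l, P' i j * P' k l - P' i l * P' k j = 0 := by
    intro i j k l
    have := congrArg (MvPolynomial.map φ) (h2 i j k l)
    simpa [hP'] using this
  have h3' : ∑ i, P' i i = 1 := by
    have := congrArg (MvPolynomial.map φ) h3
    simpa [hP'] using this
  have hd' : P' ⟨0, hn⟩ ⟨0, hn⟩ ≠ 0 := by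
    intro hcontra
    have heval : MvPolynomial.eval (fun _ => (0 : K)) (P' ⟨0, hn⟩ ⟨0, hn⟩) = 1 := by
      rw [hP', MvPolynomial.eval_zero', MvPolynomial.constantCoeff_map,
        ← MvPolynomial.eval_zero', h0]
      simp
    rw [hcontra] at heval
    simp at heval
  letI : NormalizationMonoid (MvPolynomial (Fin m) K) :=
    UniqueFactorizationMonoid.normalizationMonoid.toNormalizationMonoid
  letI : NormalizedGCDMonoid (MvPolynomial (Fin m) K) :=
    UniqueFactorizationMonoid.toNormalizedGCDMonoid _
  obtain ⟨f, g, hfg1, hfg2⟩ := lemA hn P' h2' h3' hd'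
  -- descent to a localization away from a single element
  obtain ⟨b, hb⟩ := IsLocalization.exist_integer_multiples_of_finite
      (R := MvPolynomial (Fin m) C) (S := MvPolynomial (Fin m) K)
      (p.primeCompl.map (MvPolynomial.C (σ := Fin m))) (Sum.elim f g)
  obtain ⟨t₀, ht₀, hbt₀⟩ := Submonoid.mem_map.mp b.2
  have hFex : ∀ i : Fin n, ∃ F, MvPolynomial.map φ F = (↑b : MvPolynomial (Fin m) C) • f i :=
    fun i => hb (Sum.inl i)
  have hGex : ∀ j : Fin n, ∃ G, MvPolynomial.map φ G = (↑b : MvPolynomial (Fin m) C) • g j :=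
    fun j => hb (Sum.inr j)
  choose F hF using hFex
  choose G hG using hGex
  have hsmul : ∀ x : MvPolynomial (Fin m) K,
      (↑b : MvPolynomial (Fin m) C) • x = MvPolynomial.map φ (MvPolynomial.C t₀) * x := by
    intro x
    rw [Algebra.smul_def, MvPolynomial.algebraMap_def, hbt₀]
  -- identity 1 over the base, up to a multiplier
  have halg1 : MvPolynomial.map φ (∑ i, G i * F i)
      = MvPolynomial.map φ (MvPolynomial.C t₀ * MvPolynomial.C t₀) := by
    rw [map_sum, map_mul]
    have key : ∀ i : Fin n, MvPolynomial.map φ (G i * F i)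
        = MvPolynomial.map φ (MvPolynomial.C t₀) * MvPolynomial.map φ (MvPolynomial.C t₀)
          * (g i * f i) := by
      intro i
      rw [map_mul, hF, hG, hsmul, hsmul]
      ring
    rw [Finset.sum_congr rfl fun i _ => key i, ← Finset.mul_sum, hfg1, mul_one]
  obtain ⟨c₁, hc₁⟩ := IsLocalization.exists_of_eq
      (M := p.primeCompl.map (MvPolynomial.C (σ := Fin m))) halg1
  obtain ⟨t₁, ht₁, hct₁⟩ := Submonoid.mem_map.mp c₁.2
  rw [← hct₁] at hc₁
  -- identity 2 over the base, up to multipliers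
  have halg2 : ∀ i j, MvPolynomial.map φ (P i j * (MvPolynomial.C t₀ * MvPolynomial.C t₀))
      = MvPolynomial.map φ (F i * G j) := by
    intro i j
    rw [map_mul, map_mul, map_mul, hF, hG, hsmul, hsmul]
    have hPij : MvPolynomial.map φ (P i j) = f i * g j := hfg2 i j
    rw [hPij]
    ring
  have E2 : ∀ i j, ∃ tt ∈ p.primeCompl,
      MvPolynomial.C tt * (P i j * (MvPolynomial.C t₀ * MvPolynomial.C t₀))
        = MvPolynomial.C tt * (F i * G j) := by
    intro i j
    obtain ⟨c, hc⟩ := IsLocalization.exists_of_eq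
        (M := p.primeCompl.map (MvPolynomial.C (σ := Fin m))) (halg2 i j)
    obtain ⟨tt, htt, hctt⟩ := Submonoid.mem_map.mp c.2
    exact ⟨tt, htt, by rw [hctt]; exact hc⟩
  choose t htp hteq using E2
  -- the element a
  set a := t₀ * t₁ * ∏ i, ∏ j, t i j with ha_def
  have haM : a ∈ p.primeCompl :=
    Submonoid.mul_mem _ (Submonoid.mul_mem _ ht₀ ht₁)
      (Submonoid.prod_mem _ fun i _ => Submonoid.prod_mem _ fun j _ => htp i j)
  -- pass to Localization.Away a
  set L := Localization.Away a with hL_def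
  set ψ := algebraMap C L with hψ
  have hua : IsUnit (ψ a) :=
    IsLocalization.map_units (M := Submonoid.powers a) L ⟨a, Submonoid.mem_powers a⟩
  have hu : ∀ x : C, x ∣ a → IsUnit (ψ x) := fun x hx =>
    isUnit_of_dvd_unit (map_dvd ψ hx) hua
  have ht₀u : IsUnit (ψ t₀) := hu t₀ ⟨t₁ * ∏ i, ∏ j, t i j, by rw [ha_def]; ring⟩
  have ht₁u : IsUnit (ψ t₁) := hu t₁ ⟨t₀ * ∏ i, ∏ j, t i j, by rw [ha_def]; ring⟩
  have htiju : ∀ i j, IsUnit (ψ (t i j)) := by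
    intro i j
    have d1 : t i j ∣ ∏ j', t i j' := Finset.dvd_prod_of_mem _ (Finset.mem_univ j)
    have d2 : (∏ j', t i j') ∣ ∏ i', ∏ j', t i' j' :=
      Finset.dvd_prod_of_mem _ (Finset.mem_univ i)
    exact hu _ ((d1.trans d2).mul_left (t₀ * t₁))
  -- inverse of t₀ in L
  obtain ⟨u₀, hu₀⟩ := ht₀u
  set r : L := ↑u₀⁻¹ with hr_def
  have hr : ψ t₀ * r = 1 := by rw [← hu₀, hr_def]; exact u₀.mul_inv
  have hC1 : (MvPolynomial.C r : MvPolynomial (Fin m) L) * MvPolynomial.C (ψ t₀) = 1 := by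
    rw [← MvPolynomial.C_mul, mul_comm r, hr, MvPolynomial.C_1]
  have hCt₁u : IsUnit (MvPolynomial.C (ψ t₁) : MvPolynomial (Fin m) L) :=
    ht₁u.map (MvPolynomial.C : L →+* MvPolynomial (Fin m) L)
  have hCtu : ∀ i j, IsUnit (MvPolynomial.C (ψ (t i j)) : MvPolynomial (Fin m) L) :=
    fun i j => (htiju i j).map (MvPolynomial.C : L →+* MvPolynomial (Fin m) L)
  have hfinal : a = 0 := by
    apply H a
    refine ⟨fun i => MvPolynomial.C r * MvPolynomial.map ψ (F i),
      fun j => MvPolynomial.C r * MvPolynomial.map ψ (G j), ?_, ?_⟩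
    · -- sum identity
      have m1 := congrArg (MvPolynomial.map ψ) hc₁
      simp only [map_mul, map_sum, MvPolynomial.map_C] at m1
      have e1 : (∑ i, MvPolynomial.map ψ (G i) * MvPolynomial.map ψ (F i))
          = MvPolynomial.C (ψ t₀) * MvPolynomial.C (ψ t₀) := hCt₁u.mul_left_cancel m1
      have e2 : ∀ i : Fin n,
          (MvPolynomial.C r * MvPolynomial.map ψ (G i))
            * (MvPolynomial.C r * MvPolynomial.map ψ (F i))
          = MvPolynomial.C r * MvPolynomial.C r
            * (MvPolynomial.map ψ (G i) * MvPolynomial.map ψ (F i)) := by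
        intro i; ring
      rw [Finset.sum_congr rfl fun i _ => e2 i, ← Finset.mul_sum, e1]
      calc MvPolynomial.C r * MvPolynomial.C r
            * (MvPolynomial.C (ψ t₀) * MvPolynomial.C (ψ t₀))
          = (MvPolynomial.C r * MvPolynomial.C (ψ t₀))
            * (MvPolynomial.C r * MvPolynomial.C (ψ t₀)) := by ring
        _ = 1 := by rw [hC1, mul_one]
    · -- entrywise identity
      intro i j
      have m2 := congrArg (MvPolynomial.map ψ) (hteq i j)
      simp only [map_mul, MvPolynomial.map_C] at m2
      have e1 : MvPolynomial.map ψ (P i j)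
            * (MvPolynomial.C (ψ t₀) * MvPolynomial.C (ψ t₀))
          = MvPolynomial.map ψ (F i) * MvPolynomial.map ψ (G j) :=
        (hCtu i j).mul_left_cancel m2
      calc MvPolynomial.map ψ (P i j)
          = MvPolynomial.map ψ (P i j)
            * ((MvPolynomial.C r * MvPolynomial.C (ψ t₀))
              * (MvPolynomial.C r * MvPolynomial.C (ψ t₀))) := by rw [hC1]; ring
        _ = (MvPolynomial.map ψ (P i j)
              * (MvPolynomial.C (ψ t₀) * MvPolynomial.C (ψ t₀)))
            * (MvPolynomial.C r * MvPolynomial.C r) := by ring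
        _ = (MvPolynomial.map ψ (F i) * MvPolynomial.map ψ (G j))
            * (MvPolynomial.C r * MvPolynomial.C r) := by rw [e1]
        _ = (MvPolynomial.C r * MvPolynomial.map ψ (F i))
            * (MvPolynomial.C r * MvPolynomial.map ψ (G j)) := by ring
  rw [hfinal] at haM
  exact haM p.zero_mem
end

section
/- A commutative ring A is zero-dimensional and reduced if and only if every element of A has a quasi-inverse. Precisely: (A is reduced and for every x ∈ A there exist a ∈ A and d ∈ ℕ with x^d = a·x^(d+1)) if and only if (for every a ∈ A there exists b ∈ A with a²·b = a and b²·a = b). -/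
/-- A commutative ring is zero-dimensional and reduced iff every element has a
quasi-inverse. -/
theorem stmt_13 {A : Type*} [CommRing A] :
    (IsReduced A ∧ ∀ x : A, ∃ a : A, ∃ d : ℕ, x ^ d = a * x ^ (d + 1)) ↔
    (∀ a : A, ∃ b : A, a ^ 2 * b = a ∧ b ^ 2 * a = b) := by
  constructor
  · rintro ⟨hred, hzd⟩ x
    obtain ⟨a, d, hd⟩ := hzd x
    have h0 : x ^ d * (1 - a * x) = 0 := by linear_combination hd
    have h1 : (x - a * x ^ 2) ^ (d + 1) = 0 := by
      have h2 : (x - a * x ^ 2) ^ (d + 1) = (x * (1 - a * x)) ^ d * (x * (1 - a * x)) := by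
        rw [← pow_succ]
        ring
      rw [h2, mul_pow]
      linear_combination (x * (1 - a * x) ^ d) * h0
    have hx : x - a * x ^ 2 = 0 := hred.eq_zero _ ⟨d + 1, h1⟩
    refine ⟨a ^ 2 * x, ?_, ?_⟩
    · linear_combination (-1 - a * x) * hx
    · linear_combination (-a ^ 2 * (1 + a * x)) * hx
  · intro hq
    constructor
    · constructor
      intro x hx
      obtain ⟨n, hn⟩ := hx
      obtain ⟨b, hb1, _⟩ := hq x
      have key : ∀ k : ℕ, x = x ^ (k + 1) * b ^ k := by
        intro k
        induction k with
        | zero => simp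
        | succ k ih => linear_combination ih - x ^ k * b ^ k * hb1
      have := key n
      rw [pow_succ, hn] at this
      simpa using this
    · intro x
      obtain ⟨b, hb1, _⟩ := hq x
      exact ⟨b, 1, by linear_combination -hb1⟩
end

section
/- Let C be a reduced commutative ring in which every element has a quasi-inverse (for each x ∈ C there is x• with x²·x• = x and x·(x•)² = x•), and let A be a subring of C. Let D be the subring of C generated by A together with the quasi-inverses x• of all elements x ∈ A. Then D is zero-dimensional reduced: every element of D has a quasi-inverse lying in D. -/
/-- If `C` is zero-dimensional reduced and `A ⊆ C` is a subring, the subring of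
`C` generated by `A` and the quasi-inverses of the elements of `A` is itself
zero-dimensional reduced: each of its elements has a quasi-inverse inside it. -/
theorem stmt_15 {C : Type*} [CommRing C] [IsReduced C]
    (hqi : ∀ x : C, ∃ b : C, x ^ 2 * b = x ∧ x * b ^ 2 = b)
    (A : Subring C) :
    ∀ d ∈ Subring.closure
        ((A : Set C) ∪ {b : C | ∃ x ∈ A, x ^ 2 * b = x ∧ b ^ 2 * x = b}),
      ∃ b ∈ Subring.closure
        ((A : Set C) ∪ {b : C | ∃ x ∈ A, x ^ 2 * b = x ∧ b ^ 2 * x = b}),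
        d ^ 2 * b = d ∧ b ^ 2 * d = b := by
  classical
  set S : Set C := {b : C | ∃ x ∈ A, x ^ 2 * b = x ∧ b ^ 2 * x = b} with hSdef
  set D := Subring.closure ((A : Set C) ∪ S) with hDdef
  -- Key lemma: for any finite set F of quasi-inverses, every element of the ring
  -- generated by A and F has a quasi-inverse in D.
  have key : ∀ F : Finset C, ↑F ⊆ S →
      ∀ d ∈ Subring.closure ((A : Set C) ∪ ↑F),
        ∃ b ∈ D, d ^ 2 * b = d ∧ b ^ 2 * d = b := by
    intro F
    induction F using Finset.induction_on with
    | empty =>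
      intro _ d hd
      rw [Finset.coe_empty, Set.union_empty, Subring.closure_eq] at hd
      obtain ⟨b, hb1, hb2⟩ := hqi d
      exact ⟨b, Subring.subset_closure (Or.inr ⟨d, hd, hb1, by linear_combination hb2⟩),
        hb1, by linear_combination hb2⟩
    | @insert s F₀ hns ih =>
      intro hsub d hd
      have hsS : s ∈ S := hsub (by simp)
      obtain ⟨a, haA, ha, hs2⟩ := hsS
      have hF₀ : (↑F₀ : Set C) ⊆ S := fun x hx => hsub (by simp [hx])
      specialize ih hF₀
      set B := Subring.closure ((A : Set C) ∪ ↑F₀) with hBdef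
      have haB : a ∈ B := Subring.subset_closure (Or.inl haA)
      -- basic identities for e = a*s
      have he : (a * s) * (a * s) = a * s := by linear_combination s * ha
      have hks : ∀ k : ℕ, a ^ k * s ^ k * (a * s) = a * s := by
        intro k
        induction k with
        | zero => simp
        | succ k ihk =>
          have : a ^ (k + 1) * s ^ (k + 1) * (a * s)
              = (a * s) * (a ^ k * s ^ k * (a * s)) := by ring
          rw [this, ihk, he]
      -- normal form for elements of B[s]
      have hnf : ∀ p ∈ Subring.closure (insert s ((A : Set C) ∪ ↑F₀)),
          ∃ b q : C, ∃ n : ℕ, b ∈ B ∧ q ∈ B ∧ p = b * (1 - a * s) + q * (a * s) * s ^ n := by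
        intro p hp
        induction hp using Subring.closure_induction with
        | mem x hx =>
          rcases hx with rfl | hx
          · exact ⟨0, 1, 1, zero_mem _, one_mem _, by linear_combination -hs2⟩
          · exact ⟨x, x, 0, Subring.subset_closure hx, Subring.subset_closure hx, by ring⟩
        | zero => exact ⟨0, 0, 0, zero_mem _, zero_mem _, by ring⟩
        | one => exact ⟨1, 1, 0, one_mem _, one_mem _, by ring⟩
        | add x y hx hy hpx hpy =>
          obtain ⟨b, q, n, hb, hq, rfl⟩ := hpx
          obtain ⟨b', q', m, hb', hq', rfl⟩ := hpy
          rcases le_total n m with hnm | hnm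
          · obtain ⟨k, rfl⟩ := Nat.le.dest hnm
            refine ⟨b + b', q * a ^ k + q', n + k, add_mem hb hb',
              add_mem (mul_mem hq (pow_mem haB k)) hq', ?_⟩
            have h1 : q * (a * s) * s ^ n = q * a ^ k * (a * s) * s ^ (n + k) := by
              have : q * a ^ k * (a * s) * s ^ (n + k)
                  = q * (a ^ k * s ^ k * (a * s)) * s ^ n := by ring
              rw [this, hks]
            linear_combination h1
          · obtain ⟨k, rfl⟩ := Nat.le.dest hnm
            refine ⟨b + b', q + q' * a ^ k, m + k, add_mem hb hb',
              add_mem hq (mul_mem hq' (pow_mem haB k)), ?_⟩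
            have h1 : q' * (a * s) * s ^ m = q' * a ^ k * (a * s) * s ^ (m + k) := by
              have : q' * a ^ k * (a * s) * s ^ (m + k)
                  = q' * (a ^ k * s ^ k * (a * s)) * s ^ m := by ring
              rw [this, hks]
            linear_combination h1
        | neg x hx hpx =>
          obtain ⟨b, q, n, hb, hq, rfl⟩ := hpx
          exact ⟨-b, -q, n, neg_mem hb, neg_mem hq, by ring⟩
        | mul x y hx hy hpx hpy =>
          obtain ⟨b, q, n, hb, hq, rfl⟩ := hpx
          obtain ⟨b', q', m, hb', hq', rfl⟩ := hpy
          refine ⟨b * b', q * q', n + m, mul_mem hb hb', mul_mem hq hq', ?_⟩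
          linear_combination (b*b' - b*q'*s^m - b'*q*s^n + q*q'*s^n*s^m) * he
      -- rewrite hd into the insert form
      rw [Finset.coe_insert, Set.union_insert] at hd
      obtain ⟨b, q, n, hb, hq, rfl⟩ := hnf d hd
      obtain ⟨b', hb'D, hbb1, hbb2⟩ := ih b hb
      obtain ⟨q', hq'D, hqq1, hqq2⟩ := ih q hq
      -- set u, w
      set e := a * s with hedef
      have haD : a ∈ D := Subring.subset_closure (Or.inl haA)
      have hsD : s ∈ D := Subring.subset_closure (Or.inr ⟨a, haA, ha, hs2⟩)
      refine ⟨b' * (1 - e) + q' * (a ^ (2*n) * s ^ n * e), ?_, ?_, ?_⟩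
      · exact add_mem (mul_mem hb'D (sub_mem (one_mem _) (mul_mem haD hsD)))
          (mul_mem hq'D (mul_mem (mul_mem (pow_mem haD _) (pow_mem hsD _))
            (mul_mem haD hsD)))
      · show (b * (1 - e) + q * e * s ^ n) ^ 2 * _ = _
        rw [hedef]
        linear_combination (1-(a*s))*hbb1 + s^n*(a*s)*hqq1
          + q^2*q'*s^n*(hks (2*n))
          + (b^2*b' - b^2*q'*a^(2*n)*s^n - q^2*b'*s^n*s^n
              + q^2*q'*a^(2*n)*s^n*s^n*s^n
              + (b - q*s^n)^2*(b'*(1-a*s)+q'*(a^(2*n)*s^n*(a*s)))) * he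
      · show _ * (b * (1 - e) + q * e * s ^ n) = _
        rw [hedef]
        linear_combination (1-(a*s))*hbb2 + a^(2*n)*s^n*(a*s)*hqq2
          + q'^2*q*a^(2*n)*s^n*(hks (2*n))
          + (b'^2*b - b'^2*q*s^n - q'^2*b*a^(2*n)*a^(2*n)*s^n*s^n
              + q'^2*q*a^(2*n)*a^(2*n)*s^n*s^n*s^n
              + (b' - q'*a^(2*n)*s^n)^2*(b*(1-a*s)+q*(a*s)*s^n)) * he
  -- Now decompose any element of D into a finitely-generated piece
  intro d hd
  have hfin : ∃ F : Finset C, ↑F ⊆ S ∧ d ∈ Subring.closure ((A : Set C) ∪ ↑F) := by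
    induction hd using Subring.closure_induction with
    | mem x hx =>
      rcases hx with hx | hx
      · exact ⟨∅, by simp, Subring.subset_closure (Or.inl hx)⟩
      · exact ⟨{x}, by simpa using hx, Subring.subset_closure (Or.inr (by simp))⟩
    | zero => exact ⟨∅, by simp, zero_mem _⟩
    | one => exact ⟨∅, by simp, one_mem _⟩
    | add x y hx hy hpx hpy =>
      obtain ⟨F₁, hF₁, hx'⟩ := hpx
      obtain ⟨F₂, hF₂, hy'⟩ := hpy
      refine ⟨F₁ ∪ F₂, by simp [Set.union_subset_iff, hF₁, hF₂], ?_⟩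
      have m1 : Subring.closure ((A : Set C) ∪ ↑F₁) ≤
          Subring.closure ((A : Set C) ∪ ↑(F₁ ∪ F₂)) := by
        apply Subring.closure_mono
        apply Set.union_subset_union_right
        simp [Finset.coe_union]
      have m2 : Subring.closure ((A : Set C) ∪ ↑F₂) ≤
          Subring.closure ((A : Set C) ∪ ↑(F₁ ∪ F₂)) := by
        apply Subring.closure_mono
        apply Set.union_subset_union_right
        simp [Finset.coe_union]
      exact add_mem (m1 hx') (m2 hy')
    | neg x hx hpx =>
      obtain ⟨F₁, hF₁, hx'⟩ := hpx
      exact ⟨F₁, hF₁, neg_mem hx'⟩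
    | mul x y hx hy hpx hpy =>
      obtain ⟨F₁, hF₁, hx'⟩ := hpx
      obtain ⟨F₂, hF₂, hy'⟩ := hpy
      refine ⟨F₁ ∪ F₂, by simp [Set.union_subset_iff, hF₁, hF₂], ?_⟩
      have m1 : Subring.closure ((A : Set C) ∪ ↑F₁) ≤
          Subring.closure ((A : Set C) ∪ ↑(F₁ ∪ F₂)) := by
        apply Subring.closure_mono
        apply Set.union_subset_union_right
        simp [Finset.coe_union]
      have m2 : Subring.closure ((A : Set C) ∪ ↑F₂) ≤
          Subring.closure ((A : Set C) ∪ ↑(F₁ ∪ F₂)) := by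
        apply Subring.closure_mono
        apply Set.union_subset_union_right
        simp [Finset.coe_union]
      exact mul_mem (m1 hx') (m2 hy')
  obtain ⟨F, hFS, hdF⟩ := hfin
  exact key F hFS d hdF
end

section
/- Every reduced commutative ring embeds in a zero-dimensional reduced ring: for every reduced commutative ring A there exist a commutative ring C and an injective ring homomorphism A → C such that C is reduced and every element of C has a quasi-inverse (for each c ∈ C there is b ∈ C with c²·b = c and b²·c = b). -/
/-- Every reduced commutative ring embeds into a zero-dimensional reduced ring. -/
theorem stmt_16 {A : Type u} [CommRing A] [IsReduced A] :
    ∃ (C : Type u) (_ : CommRing C) (f : A →+* C),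
      Function.Injective f ∧ IsReduced C ∧
        ∀ c : C, ∃ b : C, c ^ 2 * b = c ∧ b ^ 2 * c = b := by
  refine ⟨∀ p : PrimeSpectrum A, FractionRing (A ⧸ p.asIdeal), inferInstance,
    Pi.ringHom fun p => (algebraMap (A ⧸ p.asIdeal) (FractionRing (A ⧸ p.asIdeal))).comp
      (Ideal.Quotient.mk p.asIdeal), ?_, ?_, ?_⟩
  · intro a b hab
    rw [← sub_eq_zero]
    have h : ∀ p : PrimeSpectrum A, a - b ∈ p.asIdeal := by
      intro p
      have := congrFun hab p
      change (algebraMap (A ⧸ p.asIdeal) (FractionRing (A ⧸ p.asIdeal))) (Ideal.Quotient.mk p.asIdeal a) =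
        (algebraMap (A ⧸ p.asIdeal) (FractionRing (A ⧸ p.asIdeal))) (Ideal.Quotient.mk p.asIdeal b) at this
      have : Ideal.Quotient.mk p.asIdeal a = Ideal.Quotient.mk p.asIdeal b :=
        IsFractionRing.injective (A ⧸ p.asIdeal) (FractionRing (A ⧸ p.asIdeal)) this
      rwa [← sub_eq_zero, ← map_sub, Ideal.Quotient.eq_zero_iff_mem] at this
    have hnil : a - b ∈ nilradical A := by
      rw [nilradical_eq_sInf]
      exact Ideal.mem_sInf.2 fun {p} hp => h ⟨p, hp⟩
    rw [nilradical_eq_zero] at hnil; simpa using hnil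
  · constructor
    intro x hx
    funext p
    have : IsNilpotent (x p) := hx.map (Pi.evalRingHom _ p)
    exact this.eq_zero
  · intro c
    refine ⟨fun p => (c p)⁻¹, ?_, ?_⟩ <;> funext p <;>
      by_cases h : c p = 0 <;>
      simp only [Pi.mul_apply, Pi.pow_apply, Pi.inv_apply, h, inv_zero, mul_zero, zero_mul] <;>
      field_simp <;> ring
end

section
/- Let C be a reduced commutative ring in which every element has a quasi-inverse (a zero-dimensional reduced ring). Then every projective module of constant rank 1 over C[X₁,…,X_m] is free; concretely, for every n×n matrix P over C[X₁,…,X_m] which is idempotent of rank 1 (P·P = P, all 2×2 minors P i j·P k l − P i l·P k j vanish, trace P = 1), there exist f, g : Fin n → C[X₁,…,X_m] such that P i j = f i · g j for all i, j. -/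
/-- Join identity for outer-product factorizations localized at idempotents. -/
private lemma outer_join {R : Type*} [CommRing R] (a b p fu gu fv gv : R)
    (ha : a * a = a) (hb : b * b = b)
    (h1 : a * p = a * (fu * gu)) (h2 : b * p = b * (fv * gv)) :
    (a + b - a * b) * p
      = (a + b - a * b) * ((a * fu + (1 - a) * b * fv) * (a * gu + (1 - a) * b * gv)) := by
  linear_combination h1 + (1 - a) * h2 +
    (-(fu*gu) + b*b*(fv*gv + gu*fv + fu*gv) - 2*b*b*b*(fv*gv) - a*(fu*gu)
      + a*b*(gu*fv + fu*gv + fu*gu) - a*b*b*(fv*gv + gu*fv + fu*gv) + a*b*b*b*(fv*gv)) * ha +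
    (-(fv*gv) - b*(fv*gv) + a*(fv*gv) + a*b*(fv*gv)) * hb

private lemma join_idem {R : Type*} [CommRing R] {a b : R}
    (ha : a * a = a) (hb : b * b = b) :
    (a + b - a * b) * (a + b - a * b) = a + b - a * b := by
  linear_combination (1 - 2*b + b*b) * ha + (1 - a) * hb

/-- The field case: over `K[X₁,…,X_m]` with `K` a field (so a UFD), a matrix with
vanishing 2×2 minors and trace 1 is an outer product. -/
private lemma field_case {K : Type*} [Field K] (n m : ℕ)
    (P : Matrix (Fin n) (Fin n) (MvPolynomial (Fin m) K))
    (h2 : ∀ i j k l, P i j * P k l - P i l * P k j = 0)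
    (h3 : ∑ i, P i i = 1) :
    ∃ f g : Fin n → MvPolynomial (Fin m) K, ∀ i j, P i j = f i * g j := by
  classical
  letI : StrongNormalizationMonoid (MvPolynomial (Fin m) K) :=
    UniqueFactorizationMonoid.normalizationMonoid
  letI : StrongNormalizedGCDMonoid (MvPolynomial (Fin m) K) :=
    UniqueFactorizationMonoid.toStrongNormalizedGCDMonoid _
  have hminor : ∀ i j k l, P i j * P k l = P i l * P k j := fun i j k l =>
    sub_eq_zero.mp (h2 i j k l)
  -- find a nonzero diagonal entry
  have hex : ∃ a : Fin n, P a a ≠ 0 := by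
    by_contra h
    push_neg at h
    rw [Finset.sum_eq_zero (fun i _ => h i)] at h3
    exact zero_ne_one h3
  obtain ⟨a, ha⟩ := hex
  have hne : (Finset.univ : Finset (Fin n)).Nonempty := ⟨a, Finset.mem_univ a⟩
  set d : MvPolynomial (Fin m) K := Finset.gcd Finset.univ (fun j => P a j) with hd
  have hdne : d ≠ 0 := by
    intro h0
    exact ha ((Finset.gcd_eq_zero_iff.mp h0) a (Finset.mem_univ a))
  obtain ⟨v, hv, hv1⟩ := Finset.extract_gcd (fun j => P a j) hne
  have hv' : ∀ j, P a j = d * v j := fun j => hv j (Finset.mem_univ j)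
  have hva : v a ≠ 0 := by
    intro h0
    apply ha; rw [hv' a, h0, mul_zero]
  have key : ∀ i j, P i a * v j = P i j * v a := by
    intro i j
    apply mul_left_cancel₀ hdne
    calc d * (P i a * v j) = P i a * (d * v j) := by ring
      _ = P i a * P a j := by rw [← hv' j]
      _ = P i j * P a a := hminor i a a j
      _ = P i j * (d * v a) := by rw [hv' a]
      _ = d * (P i j * v a) := by ring
  have hdvd : ∀ i, v a ∣ P i a := by
    intro i
    have h1 : v a ∣ Finset.gcd Finset.univ (fun j => P i a * v j) := by
      apply Finset.dvd_gcd
      intro j _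
      exact ⟨P i j, by linear_combination key i j⟩
    rw [Finset.gcd_mul_left, hv1, mul_one] at h1
    exact dvd_normalize_iff.mp h1
  choose f hf using hdvd
  refine ⟨f, v, fun i j => ?_⟩
  apply mul_left_cancel₀ hva
  calc v a * P i j = P i j * v a := by ring
    _ = P i a * v j := (key i j).symm
    _ = (v a * f i) * v j := by rw [← hf i]
    _ = v a * (f i * v j) := by ring

/-- Over a zero-dimensional reduced ring `C`, every rank-one idempotent matrix
over `C[X₁,…,X_m]` factors as an outer product (projective modules of constant
rank one over `C[X₁,…,X_m]` are free). -/
theorem stmt_17 {C : Type*} [CommRing C] [IsReduced C]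
    (hqi : ∀ x : C, ∃ b : C, x ^ 2 * b = x ∧ b ^ 2 * x = b)
    (n m : ℕ) (P : Matrix (Fin n) (Fin n) (MvPolynomial (Fin m) C))
    (h1 : P * P = P)
    (h2 : ∀ i j k l, P i j * P k l - P i l * P k j = 0)
    (h3 : ∑ i, P i i = 1) :
    ∃ f g : Fin n → MvPolynomial (Fin m) C, ∀ i j, P i j = f i * g j := by
  classical
  by_cases hC : Subsingleton C
  · haveI : Subsingleton (MvPolynomial (Fin m) C) :=
      ⟨fun p q => by ext d; exact Subsingleton.elim _ _⟩
    exact ⟨0, 0, fun i j => Subsingleton.elim _ _⟩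
  haveI : Nontrivial C := not_subsingleton_iff_nontrivial.mp hC
  -- Good idempotents: those over which `P` factors as an outer product
  set s : Set C := {u : C | u * u = u ∧
      ∃ f g : Fin n → MvPolynomial (Fin m) C, ∀ i j, MvPolynomial.C u * P i j = MvPolynomial.C u * (f i * g j)}
    with hs
  -- every prime contains the complement of some good idempotent
  have main : ∀ (p : Ideal C), p.IsPrime → ∃ u : C, u ∈ s ∧ 1 - u ∈ p := by
    intro p hp
    haveI := hp
    have hfield : IsField (C ⧸ p) := by
      constructor
      · exact exists_pair_ne _
      · exact mul_comm
      · intro x hx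
        obtain ⟨y, rfl⟩ := Ideal.Quotient.mk_surjective x
        have hy : y ∉ p := fun h => hx (Ideal.Quotient.eq_zero_iff_mem.mpr h)
        obtain ⟨b, hb1, _⟩ := hqi y
        have hz : y * (y * b - 1) ∈ p := by
          have hyy : y * (y * b - 1) = y ^ 2 * b - y := by ring
          rw [hyy, hb1, sub_self]; exact p.zero_mem
        have hmem : y * b - 1 ∈ p := (hp.mem_or_mem hz).resolve_left hy
        refine ⟨Ideal.Quotient.mk p b, ?_⟩
        have hz2 := Ideal.Quotient.eq_zero_iff_mem.mpr hmem
        rw [map_sub, map_mul, map_one, sub_eq_zero] at hz2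
        exact hz2
    letI : Field (C ⧸ p) := hfield.toField
    set Φ : MvPolynomial (Fin m) C →+* MvPolynomial (Fin m) (C ⧸ p) :=
      MvPolynomial.map (Ideal.Quotient.mk p) with hΦ
    set Pb : Matrix (Fin n) (Fin n) (MvPolynomial (Fin m) (C ⧸ p)) :=
      fun i j => Φ (P i j) with hPb
    have h2' : ∀ i j k l, Pb i j * Pb k l - Pb i l * Pb k j = 0 := by
      intro i j k l
      have := congrArg Φ (h2 i j k l)
      simpa [hPb, map_sub, map_mul] using this
    have h3' : ∑ i, Pb i i = 1 := by
      have := congrArg Φ h3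
      simpa [hPb, map_sum] using this
    obtain ⟨fb, gb, hfg⟩ := field_case n m Pb h2' h3'
    have hsurj : Function.Surjective Φ :=
      MvPolynomial.map_surjective _ Ideal.Quotient.mk_surjective
    choose F hF using fun i => hsurj (fb i)
    choose G hG using fun j => hsurj (gb j)
    set D : Fin n → Fin n → MvPolynomial (Fin m) C := fun i j => P i j - F i * G j with hD
    have hcoeff : ∀ i j dm, MvPolynomial.coeff dm (D i j) ∈ p := by
      intro i j dm
      have hDz : Φ (D i j) = 0 := by
        rw [hD]; simp only [map_sub, map_mul, hF, hG]
        rw [← hfg i j]; exact sub_self _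
      have hc := congrArg (MvPolynomial.coeff dm) hDz
      rw [hΦ, MvPolynomial.coeff_map] at hc
      exact Ideal.Quotient.eq_zero_iff_mem.mp hc
    set S : Finset C := Finset.univ.biUnion
      (fun ij : Fin n × Fin n =>
        (D ij.1 ij.2).support.image (fun dm => MvPolynomial.coeff dm (D ij.1 ij.2))) with hS
    have hSp : ∀ x ∈ S, x ∈ p := by
      intro x hx
      rw [hS, Finset.mem_biUnion] at hx
      obtain ⟨ij, _, hx⟩ := hx
      rw [Finset.mem_image] at hx
      obtain ⟨dm, _, rfl⟩ := hx
      exact hcoeff ij.1 ij.2 dm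
    have hkill : ∀ T : Finset C, (∀ x ∈ T, x ∈ p) →
        ∃ e ∈ p, e * e = e ∧ ∀ x ∈ T, e * x = x := by
      intro T
      induction T using Finset.induction_on with
      | empty =>
        exact fun _ => ⟨0, p.zero_mem, by ring,
          fun x hx => absurd hx (Finset.notMem_empty x)⟩
      | @insert aa T haT ih =>
        intro hT
        obtain ⟨e, hep, hee, heT⟩ := ih (fun x hx => hT x (Finset.mem_insert_of_mem hx))
        have hap : aa ∈ p := hT aa (Finset.mem_insert_self _ _)
        obtain ⟨b, hb1, _⟩ := hqi aa
        have heap : aa * b ∈ p := p.mul_mem_right b hap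
        have heaa : (aa * b) * aa = aa := by
          calc aa * b * aa = aa ^ 2 * b := by ring
            _ = aa := hb1
        have heai : (aa * b) * (aa * b) = aa * b := by
          calc aa * b * (aa * b) = aa ^ 2 * b * b := by ring
            _ = aa * b := by rw [hb1]
        refine ⟨e + aa * b - e * (aa * b), ?_, join_idem hee heai, ?_⟩
        · exact p.sub_mem (p.add_mem hep heap) (p.mul_mem_left e heap)
        · intro x hx
          rcases Finset.mem_insert.mp hx with rfl | hx
          · linear_combination (1 - e) * heaa
          · linear_combination (1 - aa * b) * heT x hx
    obtain ⟨e, hep, hee, heS⟩ := hkill S hSp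
    have hkillD : ∀ i j, MvPolynomial.C (1 - e) * D i j = 0 := by
      intro i j
      apply MvPolynomial.ext
      intro dm
      rw [MvPolynomial.coeff_C_mul, MvPolynomial.coeff_zero]
      by_cases h0 : MvPolynomial.coeff dm (D i j) = 0
      · rw [h0, mul_zero]
      · have hmem : MvPolynomial.coeff dm (D i j) ∈ S := by
          rw [hS, Finset.mem_biUnion]
          exact ⟨(i, j), Finset.mem_univ _,
            Finset.mem_image.mpr ⟨dm, MvPolynomial.mem_support_iff.mpr h0, rfl⟩⟩
        linear_combination -(heS _ hmem)
    refine ⟨1 - e, ⟨by linear_combination hee, F, G, fun i j => ?_⟩, by simpa using hep⟩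
    have hk := hkillD i j
    rw [hD] at hk
    linear_combination hk
  -- the good idempotents generate the unit ideal
  have hspan : Ideal.span s = ⊤ := by
    by_contra hne
    obtain ⟨M, hM, hle⟩ := Ideal.exists_le_maximal _ hne
    obtain ⟨u, hu, hmem⟩ := main M hM.isPrime
    have huM : u ∈ M := hle (Ideal.subset_span hu)
    have h1M : (1 : C) ∈ M := by
      have := M.add_mem huM hmem
      simpa using this
    exact hM.ne_top (M.eq_top_iff_one.mpr h1M)
  have h1span : (1 : C) ∈ Ideal.span s := hspan ▸ Submodule.mem_top
  obtain ⟨T, hTs, hT1⟩ := Submodule.mem_span_finite_of_mem_span h1span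
  -- build a single good idempotent absorbing all of T
  have hbuild : ∀ T' : Finset C, (↑T' ⊆ s) →
      ∃ J : C, J ∈ s ∧ ∀ x ∈ T', x * J = x := by
    intro T'
    induction T' using Finset.induction_on with
    | empty =>
      exact fun _ => ⟨0, ⟨by ring, 0, 0, fun i j => by simp⟩,
        fun x hx => absurd hx (Finset.notMem_empty x)⟩
    | @insert u T' huT ih =>
      intro hsub
      obtain ⟨J, hJs, hJT⟩ := ih (fun x hx => hsub (Finset.mem_insert_of_mem hx))
      obtain ⟨hJi, fJ, gJ, hJfg⟩ := hJs
      have hu : u ∈ s := hsub (Finset.mem_insert_self _ _)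
      obtain ⟨hui, fu, gu, hufg⟩ := hu
      refine ⟨u + J - u * J,
        ⟨join_idem hui hJi,
          fun i => MvPolynomial.C u * fu i + (1 - MvPolynomial.C u) * MvPolynomial.C J * fJ i,
          fun j => MvPolynomial.C u * gu j + (1 - MvPolynomial.C u) * MvPolynomial.C J * gJ j,
          fun i j => ?_⟩, ?_⟩
      · have hCu : (MvPolynomial.C u : MvPolynomial (Fin m) C) * MvPolynomial.C u = MvPolynomial.C u := by
          rw [← map_mul, hui]
        have hCJ : (MvPolynomial.C J : MvPolynomial (Fin m) C) * MvPolynomial.C J = MvPolynomial.C J := by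
          rw [← map_mul, hJi]
        have hoj := outer_join (MvPolynomial.C u) (MvPolynomial.C J) (P i j)
          (fu i) (gu j) (fJ i) (gJ j) hCu hCJ (hufg i j) (hJfg i j)
        calc MvPolynomial.C (u + J - u * J) * P i j
            = (MvPolynomial.C u + MvPolynomial.C J
                - MvPolynomial.C u * MvPolynomial.C J) * P i j := by
              rw [map_sub, map_add, map_mul]
          _ = _ := by
              rw [hoj, map_sub, map_add, map_mul]
      · intro x hx
        rcases Finset.mem_insert.mp hx with rfl | hx
        · linear_combination (1 - J) * hui
        · linear_combination (1 - u) * hJT x hx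
  obtain ⟨J, hJs, hJT⟩ := hbuild T hTs
  obtain ⟨hJi, f, g, hfg⟩ := hJs
  obtain ⟨c, -, hc⟩ := Submodule.mem_span_finset.mp hT1
  have hJ1 : J = 1 := by
    calc J = (∑ x ∈ T, c x • x) * J := by rw [hc, one_mul]
      _ = ∑ x ∈ T, c x • (x * J) := by
          rw [Finset.sum_mul]
          exact Finset.sum_congr rfl fun x _ => smul_mul_assoc _ _ _
      _ = ∑ x ∈ T, c x • x := Finset.sum_congr rfl fun x hx => by rw [hJT x hx]
      _ = 1 := hc
  refine ⟨f, g, fun i j => ?_⟩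
  have := hfg i j
  rw [hJ1, map_one, one_mul, one_mul] at this
  exact this
end

section
/- Let A be a commutative pp-ring: for every x ∈ A there exists an idempotent e with Ann(x) = ⟨1 − e⟩ (the annihilator of x is generated by an idempotent). Let n ≥ 1 and let P be an n×n matrix over A whose trace is a regular element (a non-zero-divisor). Then there exists an n×n matrix J over A with J·J = I_n such that the (1,1) entry of J·P·J is a regular element of A. -/
/-- Telescoping identity: `∑_{k<m} g k ∏_{j<k} (1 - g j) + ∏_{j<m} (1 - g j) = 1`. -/
lemma stmt_19_tele {A : Type*} [CommRing A] (g : ℕ → A) (m : ℕ) :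
    ∑ k ∈ Finset.range m, g k * ∏ j ∈ Finset.range k, (1 - g j)
      + ∏ j ∈ Finset.range m, (1 - g j) = 1 := by
  induction m with
  | zero => simp
  | succ m ih =>
    rw [Finset.sum_range_succ, Finset.prod_range_succ]
    linear_combination ih

/-- Over a pp-ring (every annihilator is generated by an idempotent), a square
matrix with regular trace can be conjugated by an involutive matrix `J` so that
the `(1,1)` entry becomes regular. -/
theorem stmt_19 {A : Type*} [CommRing A]
    (hpp : ∀ x : A, ∃ e : A, e ^ 2 = e ∧
      ∀ y : A, x * y = 0 ↔ y ∈ Ideal.span ({1 - e} : Set A))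
    (n : ℕ) (hn : 0 < n) (P : Matrix (Fin n) (Fin n) A)
    (htr : (∑ i, P i i) ∈ nonZeroDivisors A) :
    ∃ J : Matrix (Fin n) (Fin n) A, J * J = 1 ∧
      (J * P * J) ⟨0, hn⟩ ⟨0, hn⟩ ∈ nonZeroDivisors A := by
  classical
  set z : Fin n := ⟨0, hn⟩ with hz
  choose e he1 he2 using fun i : Fin n => hpp (P i i)
  set g : ℕ → A := fun k => if h : k < n then e ⟨k, h⟩ else 1 with hg
  have hgi : ∀ i : Fin n, g i.val = e i := by
    intro i; simp [hg, i.isLt]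
  have hgid : ∀ k, g k * g k = g k := by
    intro k
    simp only [hg]
    split
    · next h => linear_combination he1 ⟨k, h⟩
    · ring
  set F : Fin n → A := fun i => g i.val * ∏ j ∈ Finset.range i.val, (1 - g j) with hF
  -- annihilator facts
  have hann : ∀ i : Fin n, P i i * (1 - e i) = 0 := fun i =>
    (he2 i (1 - e i)).2 (Ideal.subset_span (Set.mem_singleton _))
  have hkill : ∀ (i : Fin n) (y : A), P i i * y = 0 → y * e i = 0 := by
    intro i y h
    obtain ⟨c, hc⟩ := Ideal.mem_span_singleton'.mp ((he2 i y).1 h)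
    rw [← hc]
    linear_combination (-c) * he1 i
  -- the product of all (1 - e i) is 0, since it annihilates the regular trace
  have hprod : (∏ j ∈ Finset.range n, (1 - g j)) = 0 := by
    have h2 : (∏ j ∈ Finset.range n, (1 - g j)) * (∑ i, P i i) = 0 := by
      rw [Finset.mul_sum]
      refine Finset.sum_eq_zero fun i _ => ?_
      obtain ⟨c, hc⟩ := Finset.dvd_prod_of_mem (fun j => 1 - g j)
        (Finset.mem_range.mpr i.isLt)
      rw [hc, hgi i]
      linear_combination c * hann i
    exact (mem_nonZeroDivisors_iff_right.mp htr) _ h2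
  -- the F i are orthogonal idempotents summing to 1
  have hFs : ∑ i, F i = 1 := by
    have ht := stmt_19_tele g n
    rw [hprod, add_zero] at ht
    rw [hF]
    rw [Fin.sum_univ_eq_sum_range (fun k => g k * ∏ j ∈ Finset.range k, (1 - g j)) n]
    exact ht
  have horthN : ∀ k l : Fin n, k.val < l.val → F k * F l = 0 := by
    intro k l hkl
    obtain ⟨c, hc⟩ := Finset.dvd_prod_of_mem (fun j => 1 - g j) (Finset.mem_range.mpr hkl)
    simp only [hF]
    rw [hc]
    linear_combination (-(∏ j ∈ Finset.range k.val, (1 - g j)) * g l.val * c) * hgid k.val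
  have hFo : ∀ k l : Fin n, k ≠ l → F k * F l = 0 := by
    intro k l hne
    rcases lt_trichotomy k.val l.val with h | h | h
    · exact horthN k l h
    · exact absurd (Fin.ext h) hne
    · rw [mul_comm]; exact horthN l k h
  have hFi : ∀ i, F i * F i = F i := by
    intro i
    have hp : (∏ j ∈ Finset.range i.val, (1 - g j)) * (∏ j ∈ Finset.range i.val, (1 - g j))
        = ∏ j ∈ Finset.range i.val, (1 - g j) := by
      rw [← Finset.prod_mul_distrib]
      exact Finset.prod_congr rfl fun j _ => by linear_combination hgid j
    simp only [hF]
    calc (g i.val * ∏ j ∈ Finset.range i.val, (1 - g j))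
          * (g i.val * ∏ j ∈ Finset.range i.val, (1 - g j))
        = (g i.val * g i.val) * ((∏ j ∈ Finset.range i.val, (1 - g j))
            * (∏ j ∈ Finset.range i.val, (1 - g j))) := by ring
      _ = g i.val * ∏ j ∈ Finset.range i.val, (1 - g j) := by rw [hgid, hp]
  -- F i * e i = F i
  have hFe : ∀ i : Fin n, F i * e i = F i := by
    intro i
    simp only [hF]
    rw [← hgi i]
    linear_combination (∏ j ∈ Finset.range i.val, (1 - g j)) * hgid i.val
  -- the involution J
  set M : Fin n → Matrix (Fin n) (Fin n) A := fun k => (Equiv.swap z k).permMatrix A with hM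
  have hMM : ∀ k, M k * M k = 1 := by
    intro k
    simp only [hM, Equiv.Perm.permMatrix]
    rw [← PEquiv.toMatrix_trans, ← Equiv.toPEquiv_trans, Equiv.swap_swap,
      Equiv.toPEquiv_refl, PEquiv.toMatrix_refl]
  have hMPM : ∀ k, (M k * P * M k) z z = P k k := by
    intro k
    simp only [hM, Equiv.Perm.permMatrix]
    rw [PEquiv.toMatrix_toPEquiv_mul, PEquiv.mul_toMatrix_toPEquiv]
    simp [Equiv.symm_swap, Equiv.swap_apply_left]
  set J : Matrix (Fin n) (Fin n) A := ∑ k, F k • M k with hJ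
  have hJJ : J * J = 1 := by
    calc J * J = ∑ k, ∑ l, (F k * F l) • (M k * M l) := by
          rw [hJ, Finset.sum_mul]
          refine Finset.sum_congr rfl fun k _ => ?_
          rw [Finset.mul_sum]
          refine Finset.sum_congr rfl fun l _ => ?_
          rw [smul_mul_assoc, mul_smul_comm, smul_smul]
      _ = ∑ k, F k • (1 : Matrix (Fin n) (Fin n) A) := by
          refine Finset.sum_congr rfl fun k _ => ?_
          rw [Finset.sum_eq_single k]
          · rw [hFi k, hMM k]
          · intro l _ hlk
            rw [hFo k l (Ne.symm hlk), zero_smul]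
          · intro h; exact absurd (Finset.mem_univ k) h
      _ = 1 := by rw [← Finset.sum_smul, hFs, one_smul]
  have hJPJ : (J * P * J) z z = ∑ k, F k * P k k := by
    have hexp : J * P * J = ∑ k, ∑ l, (F k * F l) • (M k * P * M l) := by
      rw [hJ, Finset.sum_mul, Finset.sum_mul]
      refine Finset.sum_congr rfl fun k _ => ?_
      rw [smul_mul_assoc, Finset.mul_sum]
      refine Finset.sum_congr rfl fun l _ => ?_
      rw [smul_mul_assoc, mul_smul_comm, smul_smul]
    rw [hexp]
    rw [Matrix.sum_apply]
    refine Finset.sum_congr rfl fun k _ => ?_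
    rw [Matrix.sum_apply]
    rw [Finset.sum_eq_single k]
    · rw [Matrix.smul_apply, smul_eq_mul, hFi k, hMPM k]
    · intro l _ hlk
      rw [Matrix.smul_apply, hFo k l (Ne.symm hlk), zero_smul]
    · intro h; exact absurd (Finset.mem_univ k) h
  refine ⟨J, hJJ, ?_⟩
  rw [hJPJ]
  rw [mem_nonZeroDivisors_iff_right]
  intro y hy
  have hyk : ∀ k : Fin n, y * F k = 0 := by
    intro k
    have hbF : (∑ l, F l * P l l) * F k = P k k * F k := by
      rw [Finset.sum_mul, Finset.sum_eq_single k]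
      · linear_combination P k k * hFi k
      · intro l _ hlk
        linear_combination P l l * hFo l k hlk
      · intro h; exact absurd (Finset.mem_univ k) h
    have h3 : P k k * (y * F k) = 0 := by
      calc P k k * (y * F k) = y * ((∑ l, F l * P l l) * F k) := by rw [hbF]; ring
        _ = (y * (∑ l, F l * P l l)) * F k := by ring
        _ = 0 := by rw [hy, zero_mul]
    have h4 := hkill k _ h3
    calc y * F k = (y * F k) * e k := by rw [mul_assoc, hFe k]
      _ = 0 := h4
  calc y = y * (∑ k, F k) := by rw [hFs, mul_one]
    _ = ∑ k, y * F k := Finset.mul_sum _ _ _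
    _ = 0 := Finset.sum_eq_zero fun k _ => hyk k
end
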